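/- arXiv:2203.15494 — 5 statements merged into one kernel-verified Lean document; each statement's English description precedes it below -/
import Mathlib

section
/- Let 1 ≤ i < j ≤ m−1 and n ≥ 1. Then α_i ≱_PS α_j; that is, there exists a profile of n preferences over m candidates at which the j-approval rule α_j is manipulable but the i-approval rule α_i is not manipulable. -/
/-- A preference order on `m` candidates: `σ c` is the position of candidate `c`
(position `0` is the most preferred). `σ c < σ d` means `c` is strictly preferred to `d`. -/
abbrev Pref (m : ℕ) := Fin m ≃ Fin m

/-- A voting rule for `n` voters and `m` candidates. -/
abbrev Rule (m n : ℕ) := (Fin n → Pref m) → Fin m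

/-- Total score of candidate `c` under score vector `s` (indexed by position) at profile `P`. -/
def score {m n : ℕ} (s : Fin m → ℕ) (P : Fin n → Pref m) (c : Fin m) : ℕ :=
  ∑ v, s (P v c)

/-- The scoring rule with score vector `s`: the winner is the candidate that is first in the
lexicographic tie-breaking order (i.e. has the least index) among those of maximal score. -/
def winner {m n : ℕ} [NeZero m] (s : Fin m → ℕ) (P : Fin n → Pref m) : Fin m :=
  (Finset.univ.filter fun c => ∀ d, score s P d ≤ score s P c).min' (by
    obtain ⟨c, -, hc⟩ := Finset.exists_max_image Finset.univ (score s P) Finset.univ_nonempty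
    exact ⟨c, Finset.mem_filter.mpr ⟨Finset.mem_univ c, fun d => hc d (Finset.mem_univ d)⟩⟩)

/-- `k`-approval, `α_k`: one point for each of the top `k` positions. -/
def approval (m n k : ℕ) [NeZero m] : Rule m n :=
  winner (fun r => if (r : ℕ) < k then 1 else 0)

/-- `k`-Borda, `β_k`: `max (0, k - r + 1)` points for (`1`-indexed) position `r`, i.e. `k - r`
(truncated subtraction) points for `0`-indexed position `r`. -/
def kBorda (m n k : ℕ) [NeZero m] : Rule m n :=
  winner (fun r => k - (r : ℕ))

/-- `f` is manipulable at profile `P`: some voter `v` can misreport some preference `Q` and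
obtain an outcome strictly preferred (by `v`'s true preferences) to the sincere outcome. -/
def Manipulable {m n : ℕ} (f : Rule m n) (P : Fin n → Pref m) : Prop :=
  ∃ (v : Fin n) (Q : Pref m), P v (f (Function.update P v Q)) < P v (f P)

/-- `f ≥_PS g` : every profile at which `g` is manipulable is one at which `f` is manipulable. -/
def MoreManip {m n : ℕ} (f g : Rule m n) : Prop :=
  ∀ P : Fin n → Pref m, Manipulable g P → Manipulable f P

def cyc (m j : ℕ) (h1 : 1 ≤ j) (h2 : j < m) : Fin m ≃ Fin m where
  toFun c := if (c:ℕ) = 0 then ⟨j-1, by omega⟩ else if (c:ℕ) < j then ⟨(c:ℕ)-1, by omega⟩ else c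
  invFun p := if (p:ℕ) = j-1 then ⟨0, by omega⟩ else if h : (p:ℕ) < j-1 then ⟨(p:ℕ)+1, by omega⟩ else p
  left_inv c := by
    ext
    simp only []
    split_ifs <;> simp_all [Fin.ext_iff] <;> omega
  right_inv p := by
    ext
    simp only []
    split_ifs <;> simp_all [Fin.ext_iff] <;> omega

lemma cyc_val (m j : ℕ) (h1 : 1 ≤ j) (h2 : j < m) (c : Fin m) :
    ((cyc m j h1 h2 c : Fin m) : ℕ)
      = if (c:ℕ) = 0 then j-1 else if (c:ℕ) < j then (c:ℕ)-1 else c := by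
  simp only [cyc, Equiv.coe_fn_mk]
  split_ifs <;> rfl

lemma winner_eq {m n : ℕ} [NeZero m] (s : Fin m → ℕ) (P : Fin n → Pref m) (w : Fin m)
    (hmax : ∀ d, score s P d ≤ score s P w)
    (hmin : ∀ c : Fin m, (∀ d, score s P d ≤ score s P c) → w ≤ c) :
    winner s P = w := by
  unfold winner
  apply le_antisymm
  · exact Finset.min'_le _ w (Finset.mem_filter.mpr ⟨Finset.mem_univ _, hmax⟩)
  · exact Finset.le_min' _ _ _ fun y hy => hmin y (Finset.mem_filter.mp hy).2

lemma score_const {m n : ℕ} (s : Fin m → ℕ) (σ : Pref m) (c : Fin m) :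
    score s (fun _ : Fin n => σ) c = n * s (σ c) := by
  unfold score
  simp [Finset.sum_const, Finset.card_univ, mul_comm]

lemma score_update {m n : ℕ} (s : Fin m → ℕ) (σ : Pref m) (v0 : Fin n) (Q : Pref m) (c : Fin m) :
    score s (Function.update (fun _ : Fin n => σ) v0 Q) c = s (Q c) + (n-1) * s (σ c) := by
  unfold score
  rw [show (fun v => s ((Function.update (fun _ : Fin n => σ) v0 Q v) c))
      = Function.update (fun _ : Fin n => s (σ c)) v0 (s (Q c)) from ?_]
  · rw [Finset.sum_update_of_mem (Finset.mem_univ _), Finset.sum_const,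
      Finset.sdiff_singleton_eq_erase, Finset.card_erase_of_mem (Finset.mem_univ _),
      Finset.card_univ, Fintype.card_fin, smul_eq_mul]
  · funext v
    rcases eq_or_ne v v0 with h|h <;> simp [h, Function.update_apply]

/-- For `1 ≤ i < j ≤ m-1` and `n ≥ 1`: `α_i ≱_PS α_j`. -/

theorem stmt_0 (m n i j : ℕ) [NeZero m] (hi : 1 ≤ i) (hij : i < j) (hj : j ≤ m - 1)
    (hn : 1 ≤ n) :
    ∃ P : Fin n → Pref m,
      Manipulable (approval m n j) P ∧ ¬ Manipulable (approval m n i) P := by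
  have hm1 : 1 ≤ m := Nat.pos_of_ne_zero (NeZero.ne m)
  have hj2 : 2 ≤ j := by omega
  have hjm : j < m := by omega
  obtain ⟨c0, c1, hc0, hc1⟩ : ∃ a b : Fin m, (a : ℕ) = 0 ∧ (b : ℕ) = 1 :=
    ⟨⟨0, by omega⟩, ⟨1, by omega⟩, rfl, rfl⟩
  obtain ⟨σ, hv0, hv1⟩ : ∃ σ : Pref m,
      ((σ c0 : Fin m) : ℕ) = j - 1 ∧ ((σ c1 : Fin m) : ℕ) = 0 := by
    refine ⟨cyc m j (by omega) hjm, ?_, ?_⟩ <;>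
      (rw [cyc_val]; split_ifs <;> omega)
  obtain ⟨Q, hQ0, hQ1⟩ : ∃ Q : Pref m,
      ((Q c0 : Fin m) : ℕ) = j ∧ ((Q c1 : Fin m) : ℕ) = 0 := by
    refine ⟨σ.trans (Equiv.swap ⟨j-1, by omega⟩ ⟨j, hjm⟩), ?_, ?_⟩
    · have h0 : σ c0 = ⟨j-1, by omega⟩ := Fin.ext hv0
      simp only [Equiv.trans_apply, h0, Equiv.swap_apply_left]
    · have h1 : σ c1 = ⟨0, by omega⟩ := Fin.ext hv1
      simp only [Equiv.trans_apply, h1]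
      rw [Equiv.swap_apply_of_ne_of_ne (Fin.ne_of_val_ne (by simp; omega))
        (Fin.ne_of_val_ne (by simp; omega))]
  have hWi : approval m n i (fun _ : Fin n => σ) = c1 := by
    unfold approval
    apply winner_eq
    · intro d
      rw [score_const, score_const, hv1]
      split_ifs <;> omega
    · intro c hc
      have h := hc c1
      rw [score_const, score_const, hv1] at h
      rcases Nat.lt_or_ge (c : ℕ) 1 with h0 | h1
      · have hcc : c = c0 := Fin.ext (by omega)
        rw [hcc, hv0] at h
        split_ifs at h <;> omega
      · rw [Fin.le_def, hc1]
        omega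
  have hWj : approval m n j (fun _ : Fin n => σ) = c0 := by
    unfold approval
    apply winner_eq
    · intro d
      rw [score_const, score_const, hv0]
      split_ifs <;> omega
    · intro c _
      rw [Fin.le_def, hc0]
      omega
  have hW'j : ∀ v0 : Fin n, approval m n j
      (Function.update (fun _ : Fin n => σ) v0 Q) = c1 := by
    intro v0
    unfold approval
    apply winner_eq
    · intro d
      rw [score_update, score_update, hQ1, hv1]
      have h1 : (if ((Q d : Fin m) : ℕ) < j then 1 else 0) ≤ 1 := by split_ifs <;> omega
      have h2 : (if ((σ d : Fin m) : ℕ) < j then 1 else 0) ≤ 1 := by split_ifs <;> omega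
      split_ifs at * <;> omega
    · intro c hc
      have h := hc c1
      rw [score_update, score_update, hQ1, hv1] at h
      rcases Nat.lt_or_ge (c : ℕ) 1 with h0 | h1
      · have hcc : c = c0 := Fin.ext (by omega)
        rw [hcc, hQ0, hv0] at h
        split_ifs at h <;> omega
      · rw [Fin.le_def, hc1]
        omega
  refine ⟨fun _ : Fin n => σ, ⟨⟨0, hn⟩, Q, ?_⟩, ?_⟩
  · rw [hW'j, hWj]
    show σ _ < σ _
    rw [Fin.lt_def, hv1, hv0]
    omega
  · rintro ⟨v, Q', hlt⟩
    rw [hWi] at hlt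
    rw [Fin.lt_def, hv1] at hlt
    omega
end

section
/- Let 1 ≤ i < j ≤ m−1, let n ≥ 2, and suppose m ≥ 2j. Then α_j ≱_PS α_i; that is, there exists a profile of n preferences over m candidates at which the i-approval rule α_i is manipulable but the j-approval rule α_j is not manipulable. -/
set_option maxHeartbeats 1000000


namespace PS4

/- ### permutations -/

noncomputable def mkPerm (m : ℕ) (f : ℕ → ℕ) (hf : ∀ x, x < m → f x < m)
    (hinj : ∀ x, x < m → ∀ y, y < m → f x = f y → x = y) : Pref m :=
  Equiv.ofBijective (fun x => ⟨f x.1, hf x.1 x.2⟩)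
    (Finite.injective_iff_bijective.mp fun a b hab =>
      Fin.ext (hinj a.1 a.2 b.1 b.2 (congrArg Fin.val hab)))

def fV0 (i j c : ℕ) : ℕ :=
  if c = 0 then i else if c ≤ j-1 then c+j-1 else if c ≤ j+i-1 then c-j
  else if c ≤ 2*j-2 then c+1-j else c

def fQ (j c : ℕ) : ℕ :=
  if c = 0 then 0 else if c ≤ j-1 then c+j-1 else if c ≤ 2*j-2 then c+1-j else c

def fC (t c : ℕ) : ℕ := if c = 0 then t else if c ≤ t then c-1 else c

def fD (j c : ℕ) : ℕ := if c = 2*j-1 then 0 else if c ≤ 2*j-2 then c+1 else c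

noncomputable def V0 (m i j : ℕ) (h : 1 ≤ i ∧ i < j ∧ 2*j ≤ m) : Pref m :=
  mkPerm m (fV0 i j)
    (by obtain ⟨h1, h2, h3⟩ := h; intro x hx; unfold fV0; split_ifs <;> omega)
    (by obtain ⟨h1, h2, h3⟩ := h; intro x hx y hy hxy; unfold fV0 at hxy;
        split_ifs at hxy <;> omega)

noncomputable def QQ (m i j : ℕ) (h : 1 ≤ i ∧ i < j ∧ 2*j ≤ m) : Pref m :=
  mkPerm m (fQ j)
    (by obtain ⟨h1, h2, h3⟩ := h; intro x hx; unfold fQ; split_ifs <;> omega)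
    (by obtain ⟨h1, h2, h3⟩ := h; intro x hx y hy hxy; unfold fQ at hxy;
        split_ifs at hxy <;> omega)

noncomputable def cycPerm (m t : ℕ) (ht : t < m) : Pref m :=
  mkPerm m (fC t)
    (by intro x hx; unfold fC; split_ifs <;> omega)
    (by intro x hx y hy hxy; unfold fC at hxy; split_ifs at hxy <;> omega)

noncomputable def DD (m i j : ℕ) (h : 1 ≤ i ∧ i < j ∧ 2*j ≤ m) : Pref m :=
  mkPerm m (fD j)
    (by obtain ⟨h1, h2, h3⟩ := h; intro x hx; unfold fD; split_ifs <;> omega)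
    (by obtain ⟨h1, h2, h3⟩ := h; intro x hx y hy hxy; unfold fD at hxy;
        split_ifs at hxy <;> omega)

@[simp] lemma V0_val (m i j : ℕ) (h) (d : Fin m) : ((V0 m i j h) d : ℕ) = fV0 i j d.1 := rfl
@[simp] lemma QQ_val (m i j : ℕ) (h) (d : Fin m) : ((QQ m i j h) d : ℕ) = fQ j d.1 := rfl
@[simp] lemma cyc_val (m t : ℕ) (ht) (d : Fin m) : ((cycPerm m t ht) d : ℕ) = fC t d.1 := rfl
@[simp] lemma DD_val (m i j : ℕ) (h) (d : Fin m) : ((DD m i j h) d : ℕ) = fD j d.1 := rfl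

/- ### indicator lemmas -/

section ind
variable {i j c : ℕ}

lemma indV0 (h1 : 1 ≤ i) (h2 : i < j) :
    (if fV0 i j c < i then (1:ℕ) else 0) = if j ≤ c ∧ c < j + i then 1 else 0 := by
  unfold fV0; split_ifs <;> omega

lemma indQ (h1 : 1 ≤ i) (h2 : i < j) :
    (if fQ j c < i then (1:ℕ) else 0) = if c = 0 ∨ (j ≤ c ∧ c + 1 < j + i) then 1 else 0 := by
  unfold fQ; split_ifs <;> omega

lemma indC (h1 : 1 ≤ i) :
    (if fC i c < i then (1:ℕ) else 0) = if 1 ≤ c ∧ c ≤ i then 1 else 0 := by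
  unfold fC; split_ifs <;> omega

lemma indSW (h1 : 1 ≤ i) :
    (if fC 1 c < i then (1:ℕ) else 0) =
      if c = 1 ∨ (c = 0 ∧ 1 < i) ∨ (1 < c ∧ c < i) then 1 else 0 := by
  unfold fC; split_ifs <;> omega

lemma indD (h1 : 1 ≤ i) (h2 : i < j) :
    (if fD j c < i then (1:ℕ) else 0) = if c = 2*j-1 ∨ c + 1 < i then 1 else 0 := by
  unfold fD; split_ifs <;> omega

end ind

/- ### sums and scores -/

lemma sum_split (n A B : ℕ) (hA : 1 ≤ A) (hAB : A ≤ B) (hB : B ≤ n - 1) (hn : 2 ≤ n)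
    (c0 c1 cS cI cD : ℕ) :
    (∑ v : Fin n, (if (v : ℕ) = 0 then c0 else if (v : ℕ) = 1 then c1 else
      if (v : ℕ) ≤ A then cS else if (v : ℕ) ≤ B then cI else cD))
    = c0 + c1 + (A - 1) * cS + (B - A) * cI + (n - 1 - B) * cD := by
  set F : ℕ → ℕ := fun x => if x = 0 then c0 else if x = 1 then c1 else
      if x ≤ A then cS else if x ≤ B then cI else cD with hF
  calc (∑ v : Fin n, (if (v : ℕ) = 0 then c0 else if (v : ℕ) = 1 then c1 else
      if (v : ℕ) ≤ A then cS else if (v : ℕ) ≤ B then cI else cD))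
      = ∑ x ∈ Finset.range n, F x := Fin.sum_univ_eq_sum_range F n
    _ = c0 + c1 + (A - 1) * cS + (B - A) * cI + (n - 1 - B) * cD := by
        rw [Finset.range_eq_Ico,
          ← Finset.sum_Ico_consecutive F (Nat.zero_le (B+1)) (by omega : B+1 ≤ n),
          ← Finset.sum_Ico_consecutive F (Nat.zero_le (A+1)) (by omega : A+1 ≤ B+1),
          ← Finset.sum_Ico_consecutive F (Nat.zero_le 2) (by omega : 2 ≤ A+1)]
        have e1 : ∑ x ∈ Finset.Ico 0 2, F x = c0 + c1 := by
          rw [← Finset.range_eq_Ico, Finset.sum_range_succ, Finset.sum_range_one]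
          simp [hF]
        have e2 : ∑ x ∈ Finset.Ico 2 (A+1), F x = (A - 1) * cS := by
          rw [Finset.sum_congr rfl (fun x hx => ?_), Finset.sum_const, smul_eq_mul,
            Nat.card_Ico, (by omega : A + 1 - 2 = A - 1)]
          rw [Finset.mem_Ico] at hx
          show F x = cS
          rw [hF]; simp only
          rw [if_neg (by omega), if_neg (by omega), if_pos (by omega)]
        have e3 : ∑ x ∈ Finset.Ico (A+1) (B+1), F x = (B - A) * cI := by
          rw [Finset.sum_congr rfl (fun x hx => ?_), Finset.sum_const, smul_eq_mul,
            Nat.card_Ico, (by omega : B + 1 - (A+1) = B - A)]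
          rw [Finset.mem_Ico] at hx
          show F x = cI
          rw [hF]; simp only
          rw [if_neg (by omega), if_neg (by omega), if_neg (by omega), if_pos (by omega)]
        have e4 : ∑ x ∈ Finset.Ico (B+1) n, F x = (n - 1 - B) * cD := by
          rw [Finset.sum_congr rfl (fun x hx => ?_), Finset.sum_const, smul_eq_mul,
            Nat.card_Ico, (by omega : n - (B+1) = n - 1 - B)]
          rw [Finset.mem_Ico] at hx
          show F x = cD
          rw [hF]; simp only
          rw [if_neg (by omega), if_neg (by omega), if_neg (by omega), if_neg (by omega)]
        rw [e1, e2, e3, e4]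

lemma score_profile {m n : ℕ} (s : Fin m → ℕ) (T0 T1 TS TI TD : Pref m) (A B : ℕ)
    (hA : 1 ≤ A) (hAB : A ≤ B) (hB : B ≤ n - 1) (hn : 2 ≤ n) (d : Fin m) :
    score s (fun v : Fin n => if (v : ℕ) = 0 then T0 else if (v : ℕ) = 1 then T1 else
      if (v : ℕ) ≤ A then TS else if (v : ℕ) ≤ B then TI else TD) d
    = s (T0 d) + s (T1 d) + (A - 1) * s (TS d) + (B - A) * s (TI d) + (n - 1 - B) * s (TD d) := by
  unfold score
  rw [Finset.sum_congr rfl (fun v _ => ?_), sum_split n A B hA hAB hB hn]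
  show s ((if (v : ℕ) = 0 then T0 else if (v : ℕ) = 1 then T1 else
      if (v : ℕ) ≤ A then TS else if (v : ℕ) ≤ B then TI else TD) d)
    = (if (v : ℕ) = 0 then s (T0 d) else if (v : ℕ) = 1 then s (T1 d) else
      if (v : ℕ) ≤ A then s (TS d) else if (v : ℕ) ≤ B then s (TI d) else s (TD d))
  split_ifs <;> rfl

lemma winner_eq_of {m n : ℕ} [NeZero m] (s : Fin m → ℕ) (P : Fin n → Pref m) (c : Fin m)
    (hmax : ∀ d, score s P d ≤ score s P c)
    (hlt : ∀ d, d < c → score s P d < score s P c) :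
    winner s P = c := by
  have hc : c ∈ Finset.univ.filter fun c' => ∀ d, score s P d ≤ score s P c' :=
    Finset.mem_filter.mpr ⟨Finset.mem_univ _, hmax⟩
  apply le_antisymm (Finset.min'_le _ _ hc)
  by_contra hcon
  push_neg at hcon
  have hmem := Finset.min'_mem (Finset.univ.filter fun c' => ∀ d, score s P d ≤ score s P c')
    ⟨c, hc⟩
  have h2 := (Finset.mem_filter.mp hmem).2 c
  have h3 := hlt _ hcon
  unfold winner at *
  omega

lemma notManip {m n : ℕ} [NeZero m] (j : ℕ) (hm : 0 < m) (P : Fin n → Pref m)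
    (h1 : ∀ v, ((P v) ⟨0, hm⟩ : ℕ) < j)
    (h2 : ∀ (v : Fin n) (d : Fin m), ((P v) d : ℕ) < ((P v) ⟨0, hm⟩ : ℕ) →
      ∃ w : Fin n, w ≠ v ∧ j ≤ ((P w) d : ℕ)) :
    ¬ Manipulable (approval m n j) P := by
  rintro ⟨v, Q, hQ⟩
  have hfP : approval m n j P = ⟨0, hm⟩ := by
    unfold approval winner
    apply le_antisymm
    · apply Finset.min'_le
      refine Finset.mem_filter.mpr ⟨Finset.mem_univ _, fun d => ?_⟩
      refine Finset.sum_le_sum fun u _ => ?_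
      have := h1 u
      dsimp only
      split_ifs <;> omega
    · exact Fin.le_def.mpr (Nat.zero_le _)
  rw [hfP] at hQ
  set P' := Function.update P v Q with hP'
  set d := approval m n j P' with hdd
  have hvd : ((P v) d : ℕ) < ((P v) ⟨0, hm⟩ : ℕ) := Fin.lt_def.mp hQ
  obtain ⟨w, hwv, hwd⟩ := h2 v d hvd
  have hdmem : d ∈ Finset.univ.filter
      (fun c => ∀ e, score (fun r : Fin m => if (r : ℕ) < j then 1 else 0) P' e
        ≤ score (fun r : Fin m => if (r : ℕ) < j then 1 else 0) P' c) := by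
    rw [hdd]; unfold approval winner; exact Finset.min'_mem _ _
  have hdmax := (Finset.mem_filter.mp hdmem).2
  have hsd : score (fun r : Fin m => if (r : ℕ) < j then 1 else 0) P' d ≤ n - 1 := by
    unfold score
    rw [← Finset.sum_erase_add _ _ (Finset.mem_univ w)]
    dsimp only
    have hw0 : (if ((P' w) d : ℕ) < j then 1 else 0) = 0 := by
      rw [hP', Function.update_of_ne hwv]
      rw [if_neg (by omega)]
    rw [hw0, add_zero]
    calc ∑ u ∈ Finset.univ.erase w, (if ((P' u) d : ℕ) < j then 1 else 0)
        ≤ ∑ _u ∈ Finset.univ.erase w, 1 :=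
          Finset.sum_le_sum fun u _ => by split_ifs <;> omega
      _ = (Finset.univ.erase w).card := by rw [Finset.sum_const, smul_eq_mul, mul_one]
      _ = n - 1 := by
          rw [Finset.card_erase_of_mem (Finset.mem_univ _), Finset.card_univ, Fintype.card_fin]
  have hs0 : n - 1 ≤ score (fun r : Fin m => if (r : ℕ) < j then 1 else 0) P' ⟨0, hm⟩ := by
    unfold score
    have : (n - 1 : ℕ) = ∑ _u ∈ Finset.univ.erase v, 1 := by
      rw [Finset.sum_const, smul_eq_mul, mul_one,
        Finset.card_erase_of_mem (Finset.mem_univ _), Finset.card_univ, Fintype.card_fin]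
    rw [this]
    dsimp only
    calc ∑ _u ∈ Finset.univ.erase v, 1
        ≤ ∑ u ∈ Finset.univ.erase v, (if ((P' u) ⟨0, hm⟩ : ℕ) < j then 1 else 0) := by
          refine Finset.sum_le_sum fun u hu => ?_
          have hu' : u ≠ v := (Finset.mem_erase.mp hu).1
          rw [hP', Function.update_of_ne hu', if_pos (h1 u)]
      _ ≤ ∑ u, (if ((P' u) ⟨0, hm⟩ : ℕ) < j then 1 else 0) :=
          Finset.sum_le_sum_of_subset (Finset.erase_subset _ _)
  have hz : (⟨0, hm⟩ : Fin m) ∈ Finset.univ.filter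
      (fun c => ∀ e, score (fun r : Fin m => if (r : ℕ) < j then 1 else 0) P' e
        ≤ score (fun r : Fin m => if (r : ℕ) < j then 1 else 0) P' c) :=
    Finset.mem_filter.mpr ⟨Finset.mem_univ _, fun e => le_trans (hdmax e) (le_trans hsd hs0)⟩
  have hle : d ≤ ⟨0, hm⟩ := by
    rw [hdd]; unfold approval winner; exact Finset.min'_le _ _ hz
  have hdz : d = ⟨0, hm⟩ := le_antisymm hle (Fin.le_def.mpr (Nat.zero_le _))
  rw [hdz] at hvd
  omega




section key
variable {n i j c : ℕ}

lemma keyS1 (hi : 1 ≤ i) (hij : i < j) (hn : 2 ≤ n) :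
    (if j ≤ (1:ℕ) ∧ (1:ℕ) < j + i then 1 else 0)
        + (if 1 ≤ (1:ℕ) ∧ (1:ℕ) ≤ i then 1 else 0)
        + (n/2 - 1) * (if (1:ℕ) = 1 ∨ ((1:ℕ) = 0 ∧ 1 < i) ∨ (1 < (1:ℕ) ∧ (1:ℕ) < i)
            then 1 else 0)
        + (n - 1 - (if i = 1 then n % 2 else 0) - n/2) * (if (1:ℕ) < i then 1 else 0)
        + (n - 1 - (n - 1 - (if i = 1 then n % 2 else 0)))
            * (if (1:ℕ) = 2*j-1 ∨ (1:ℕ)+1 < i then 1 else 0)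
      = n/2 + (n - 1 - (if i = 1 then n % 2 else 0) - n/2) * (if 1 < i then 1 else 0) := by
  split_ifs <;>
    (try simp only [false_or, false_and, or_false, and_false, true_and, and_true, true_or,
      or_true, not_true, not_false_iff] at *) <;> omega

lemma keyle (hi : 1 ≤ i) (hij : i < j) (hn : 2 ≤ n) :
    (if j ≤ c ∧ c < j + i then 1 else 0)
        + (if 1 ≤ c ∧ c ≤ i then 1 else 0)
        + (n/2 - 1) * (if c = 1 ∨ (c = 0 ∧ 1 < i) ∨ (1 < c ∧ c < i)
            then 1 else 0)
        + (n - 1 - (if i = 1 then n % 2 else 0) - n/2) * (if c < i then 1 else 0)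
        + (n - 1 - (n - 1 - (if i = 1 then n % 2 else 0)))
            * (if c = 2*j-1 ∨ c+1 < i then 1 else 0)
      ≤ n/2 + (n - 1 - (if i = 1 then n % 2 else 0) - n/2) * (if 1 < i then 1 else 0) := by
  split_ifs <;>
    (try simp only [false_or, false_and, or_false, and_false, true_and, and_true, true_or,
      or_true, not_true, not_false_iff] at *) <;> omega

lemma keylt (hi : 1 ≤ i) (hij : i < j) (hn : 2 ≤ n) (hc : c < 1) :
    (if j ≤ c ∧ c < j + i then 1 else 0)
        + (if 1 ≤ c ∧ c ≤ i then 1 else 0)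
        + (n/2 - 1) * (if c = 1 ∨ (c = 0 ∧ 1 < i) ∨ (1 < c ∧ c < i)
            then 1 else 0)
        + (n - 1 - (if i = 1 then n % 2 else 0) - n/2) * (if c < i then 1 else 0)
        + (n - 1 - (n - 1 - (if i = 1 then n % 2 else 0)))
            * (if c = 2*j-1 ∨ c+1 < i then 1 else 0)
      < n/2 + (n - 1 - (if i = 1 then n % 2 else 0) - n/2) * (if 1 < i then 1 else 0) := by
  split_ifs <;>
    (try simp only [false_or, false_and, or_false, and_false, true_and, and_true, true_or,
      or_true, not_true, not_false_iff] at *) <;> omega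

lemma keyS0' (hi : 1 ≤ i) (hij : i < j) (hn : 2 ≤ n) :
    (if (0:ℕ) = 0 ∨ (j ≤ (0:ℕ) ∧ (0:ℕ) + 1 < j + i) then 1 else 0)
        + (if 1 ≤ (0:ℕ) ∧ (0:ℕ) ≤ i then 1 else 0)
        + (n/2 - 1) * (if (0:ℕ) = 1 ∨ ((0:ℕ) = 0 ∧ 1 < i) ∨ (1 < (0:ℕ) ∧ (0:ℕ) < i)
            then 1 else 0)
        + (n - 1 - (if i = 1 then n % 2 else 0) - n/2) * (if (0:ℕ) < i then 1 else 0)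
        + (n - 1 - (n - 1 - (if i = 1 then n % 2 else 0)))
            * (if (0:ℕ) = 2*j-1 ∨ (0:ℕ)+1 < i then 1 else 0)
      = 1 + (n/2 - 1) * (if 1 < i then 1 else 0)
          + (n - 1 - (if i = 1 then n % 2 else 0) - n/2) := by
  split_ifs <;>
    (try simp only [false_or, false_and, or_false, and_false, true_and, and_true, true_or,
      or_true, not_true, not_false_iff] at *) <;> omega

lemma keyle' (hi : 1 ≤ i) (hij : i < j) (hn : 2 ≤ n) :
    (if c = 0 ∨ (j ≤ c ∧ c + 1 < j + i) then 1 else 0)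
        + (if 1 ≤ c ∧ c ≤ i then 1 else 0)
        + (n/2 - 1) * (if c = 1 ∨ (c = 0 ∧ 1 < i) ∨ (1 < c ∧ c < i)
            then 1 else 0)
        + (n - 1 - (if i = 1 then n % 2 else 0) - n/2) * (if c < i then 1 else 0)
        + (n - 1 - (n - 1 - (if i = 1 then n % 2 else 0)))
            * (if c = 2*j-1 ∨ c+1 < i then 1 else 0)
      ≤ 1 + (n/2 - 1) * (if 1 < i then 1 else 0)
          + (n - 1 - (if i = 1 then n % 2 else 0) - n/2) := by
  split_ifs <;>
    (try simp only [false_or, false_and, or_false, and_false, true_and, and_true, true_or,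
      or_true, not_true, not_false_iff] at *) <;> omega

lemma keyfv (hi : 1 ≤ i) (hij : i < j) : fV0 i j 0 < fV0 i j 1 := by
  unfold fV0; split_ifs <;> (try simp only [not_true, not_false_iff] at *) <;> omega

lemma keyV0j (hi : 1 ≤ i) (hij : i < j) : fV0 i j 0 < j := by
  unfold fV0; split_ifs <;> (try simp only [not_true, not_false_iff] at *) <;> omega
lemma keyCj (hi : 1 ≤ i) (hij : i < j) : fC i 0 < j := by
  unfold fC; split_ifs <;> (try simp only [not_true, not_false_iff] at *) <;> omega
lemma keySWj (hi : 1 ≤ i) (hij : i < j) : fC 1 0 < j := by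
  unfold fC; split_ifs <;> (try simp only [not_true, not_false_iff] at *) <;> omega
lemma keyDj (hi : 1 ≤ i) (hij : i < j) : fD j 0 < j := by
  unfold fD; split_ifs <;> (try simp only [not_true, not_false_iff] at *) <;> omega

end key

noncomputable def prof (m n i j : ℕ) (h : 1 ≤ i ∧ i < j ∧ 2*j ≤ m) : Fin n → Pref m :=
  fun v => if (v : ℕ) = 0 then V0 m i j h
    else if (v : ℕ) = 1 then cycPerm m i (by omega)
    else if (v : ℕ) ≤ n/2 then cycPerm m 1 (by omega)
    else if (v : ℕ) ≤ n - 1 - (if i = 1 then n % 2 else 0) then Equiv.refl _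
    else DD m i j h

lemma prof_manip (m n i j : ℕ) [NeZero m] (h : 1 ≤ i ∧ i < j ∧ 2*j ≤ m) (hn : 2 ≤ n) :
    Manipulable (approval m n i) (prof m n i j h) := by
  obtain ⟨hi, hij, hm⟩ := h
  have h : 1 ≤ i ∧ i < j ∧ 2*j ≤ m := ⟨hi, hij, hm⟩
  have h0m : 0 < m := by omega
  have h1m : 1 < m := by omega
  have hv0 : 0 < n := by omega
  have hA : 1 ≤ n/2 := by omega
  have hAB : n/2 ≤ n - 1 - (if i = 1 then n % 2 else 0) := by split_ifs <;> omega
  have hB : n - 1 - (if i = 1 then n % 2 else 0) ≤ n - 1 := by omega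
  -- closed form for scores of the sincere profile
  have hsc : ∀ d : Fin m, score (fun r : Fin m => if (r : ℕ) < i then 1 else 0)
      (prof m n i j h) d
      = (if j ≤ (d:ℕ) ∧ (d:ℕ) < j + i then 1 else 0)
        + (if 1 ≤ (d:ℕ) ∧ (d:ℕ) ≤ i then 1 else 0)
        + (n/2 - 1) * (if (d:ℕ) = 1 ∨ ((d:ℕ) = 0 ∧ 1 < i) ∨ (1 < (d:ℕ) ∧ (d:ℕ) < i)
            then 1 else 0)
        + (n - 1 - (if i = 1 then n % 2 else 0) - n/2) * (if (d:ℕ) < i then 1 else 0)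
        + (n - 1 - (n - 1 - (if i = 1 then n % 2 else 0)))
            * (if (d:ℕ) = 2*j-1 ∨ (d:ℕ)+1 < i then 1 else 0) := by
    intro d
    unfold prof
    rw [score_profile _ _ _ _ _ _ _ _ hA hAB hB hn d]
    simp only [V0_val, cyc_val, DD_val, Equiv.refl_apply]
    erw [indV0 hi hij, indC hi, indSW hi, indD hi hij]
    rfl
  have hs1 : score (fun r : Fin m => if (r : ℕ) < i then 1 else 0) (prof m n i j h) ⟨1, h1m⟩
      = n/2 + (n - 1 - (if i = 1 then n % 2 else 0) - n/2) * (if 1 < i then 1 else 0) := by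
    rw [hsc ⟨1, h1m⟩]
    exact keyS1 hi hij hn
  have hw1 : approval m n i (prof m n i j h) = ⟨1, h1m⟩ := by
    unfold approval
    refine winner_eq_of _ _ _ (fun d => ?_) (fun d hd => ?_)
    · rw [hsc d, hs1]
      exact keyle hi hij hn
    · have hd1 : (d : ℕ) < 1 := Fin.lt_def.mp hd
      rw [hsc d, hs1]
      exact keylt hi hij hn hd1
  -- the manipulated profile
  refine ⟨⟨0, hv0⟩, QQ m i j h, ?_⟩
  have hupd : Function.update (prof m n i j h) ⟨0, hv0⟩ (QQ m i j h)
      = fun v : Fin n => if (v : ℕ) = 0 then QQ m i j h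
        else if (v : ℕ) = 1 then cycPerm m i (by omega)
        else if (v : ℕ) ≤ n/2 then cycPerm m 1 (by omega)
        else if (v : ℕ) ≤ n - 1 - (if i = 1 then n % 2 else 0) then Equiv.refl _
        else DD m i j h := by
    funext u
    rcases eq_or_ne u ⟨0, hv0⟩ with rfl | hne
    · rw [Function.update_self, if_pos (rfl : ((⟨0, hv0⟩ : Fin n) : ℕ) = 0)]
    · have hu0 : (u : ℕ) ≠ 0 := fun hc => hne (Fin.ext hc)
      rw [Function.update_of_ne hne]
      unfold prof
      rw [if_neg hu0, if_neg hu0]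
  have hsc' : ∀ d : Fin m, score (fun r : Fin m => if (r : ℕ) < i then 1 else 0)
      (fun v : Fin n => if (v : ℕ) = 0 then QQ m i j h
        else if (v : ℕ) = 1 then cycPerm m i (by omega)
        else if (v : ℕ) ≤ n/2 then cycPerm m 1 (by omega)
        else if (v : ℕ) ≤ n - 1 - (if i = 1 then n % 2 else 0) then Equiv.refl _
        else DD m i j h) d
      = (if (d:ℕ) = 0 ∨ (j ≤ (d:ℕ) ∧ (d:ℕ) + 1 < j + i) then 1 else 0)
        + (if 1 ≤ (d:ℕ) ∧ (d:ℕ) ≤ i then 1 else 0)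
        + (n/2 - 1) * (if (d:ℕ) = 1 ∨ ((d:ℕ) = 0 ∧ 1 < i) ∨ (1 < (d:ℕ) ∧ (d:ℕ) < i)
            then 1 else 0)
        + (n - 1 - (if i = 1 then n % 2 else 0) - n/2) * (if (d:ℕ) < i then 1 else 0)
        + (n - 1 - (n - 1 - (if i = 1 then n % 2 else 0)))
            * (if (d:ℕ) = 2*j-1 ∨ (d:ℕ)+1 < i then 1 else 0) := by
    intro d
    rw [score_profile _ _ _ _ _ _ _ _ hA hAB hB hn d]
    simp only [QQ_val, cyc_val, DD_val, Equiv.refl_apply]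
    erw [indQ hi hij, indC hi, indSW hi, indD hi hij]
    rfl
  have hs0' : score (fun r : Fin m => if (r : ℕ) < i then 1 else 0)
      (fun v : Fin n => if (v : ℕ) = 0 then QQ m i j h
        else if (v : ℕ) = 1 then cycPerm m i (by omega)
        else if (v : ℕ) ≤ n/2 then cycPerm m 1 (by omega)
        else if (v : ℕ) ≤ n - 1 - (if i = 1 then n % 2 else 0) then Equiv.refl _
        else DD m i j h) ⟨0, h0m⟩
      = 1 + (n/2 - 1) * (if 1 < i then 1 else 0)
          + (n - 1 - (if i = 1 then n % 2 else 0) - n/2) := by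
    rw [hsc' ⟨0, h0m⟩]
    exact keyS0' hi hij hn
  have hw0 : approval m n i (Function.update (prof m n i j h) ⟨0, hv0⟩ (QQ m i j h))
      = ⟨0, h0m⟩ := by
    rw [hupd]
    unfold approval
    refine winner_eq_of _ _ _ (fun d => ?_) (fun d hd => ?_)
    · rw [hsc' d, hs0']
      exact keyle' hi hij hn
    · exact absurd (Fin.lt_def.mp hd) (Nat.not_lt_zero _)
  rw [hw0, hw1]
  have hP0 : prof m n i j h ⟨0, hv0⟩ = V0 m i j h := by
    unfold prof
    rw [if_pos (rfl : ((⟨0, hv0⟩ : Fin n) : ℕ) = 0)]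
  rw [hP0, Fin.lt_def]
  exact keyfv hi hij

lemma prof_nm (m n i j : ℕ) [NeZero m] (h : 1 ≤ i ∧ i < j ∧ 2*j ≤ m) (hn : 2 ≤ n) :
    ¬ Manipulable (approval m n j) (prof m n i j h) := by
  obtain ⟨hi, hij, hm⟩ := h
  have h : 1 ≤ i ∧ i < j ∧ 2*j ≤ m := ⟨hi, hij, hm⟩
  have h0m : 0 < m := by omega
  have hv0 : 0 < n := by omega
  have hv1 : 1 < n := by omega
  refine notManip j h0m _ (fun v => ?_) (fun v d hvd => ?_)
  · unfold prof
    split_ifs <;>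
      first
        | exact keyV0j hi hij
        | exact keyCj hi hij
        | exact keySWj hi hij
        | exact (by omega : (0:ℕ) < j)
        | exact keyDj hi hij
  · have hP0 : prof m n i j h ⟨0, hv0⟩ = V0 m i j h := by
      unfold prof
      rw [if_pos (rfl : ((⟨0, hv0⟩ : Fin n) : ℕ) = 0)]
    have hP1 : prof m n i j h ⟨1, hv1⟩ = cycPerm m i (by omega) := by
      unfold prof
      rw [if_neg (Nat.one_ne_zero : ¬ ((⟨1, hv1⟩ : Fin n) : ℕ) = 0),
        if_pos (rfl : ((⟨1, hv1⟩ : Fin n) : ℕ) = 1)]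
    by_cases hd0 : (d : ℕ) = 0
    · rw [show d = ⟨0, h0m⟩ from Fin.ext hd0] at hvd
      exact absurd hvd (lt_irrefl _)
    · by_cases hdj : (d : ℕ) < j
      · refine ⟨⟨0, hv0⟩, fun hv => ?_, ?_⟩
        · rw [← hv, hP0] at hvd
          simp only [V0_val, Fin.val_mk] at hvd
          unfold fV0 at hvd
          split_ifs at hvd <;> omega
        · rw [hP0]
          simp only [V0_val]
          unfold fV0
          split_ifs <;> omega
      · refine ⟨⟨1, hv1⟩, fun hv => ?_, ?_⟩
        · rw [← hv, hP1] at hvd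
          simp only [cyc_val, Fin.val_mk] at hvd
          unfold fC at hvd
          split_ifs at hvd <;> omega
        · rw [hP1]
          simp only [cyc_val]
          unfold fC
          split_ifs <;> omega

end PS4

/-- For `1 ≤ i < j ≤ m-1`, `n ≥ 2`, and `m ≥ 2j`: `α_j ≱_PS α_i`. -/
theorem stmt_4 (m n i j : ℕ) [NeZero m] (hi : 1 ≤ i) (hij : i < j) (hj : j ≤ m - 1)
    (hn : 2 ≤ n) (hm : 2 * j ≤ m) :
    ∃ P : Fin n → Pref m,
      Manipulable (approval m n i) P ∧ ¬ Manipulable (approval m n j) P := by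
  have h : 1 ≤ i ∧ i < j ∧ 2*j ≤ m := ⟨hi, hij, by omega⟩
  exact ⟨PS4.prof m n i j h, PS4.prof_manip m n i j h hn, PS4.prof_nm m n i j h hn⟩
end

section
/- Let f be a scoring rule with a non-increasing score vector s_1 ≥ s_2 ≥ … ≥ s_m and lexicographic tie-breaking, let P be a profile, let w = f(P), and fix a voter i. Call the candidates c with c ≻_i w the good candidates g_1,…,g_q and the remaining candidates (including w) the bad candidates b_1,…,b_r, where each group is ordered from highest to lowest total score in P_{-i}, candidates with equal scores being ordered by their priority in the tie-breaking order. Let P_i* be the preference g_1 ≻ … ≻ g_q ≻ b_r ≻ … ≻ b_1. Then: if there exists a preference P_i' with f(P_i',P_{-i}) ≻_i w, then also f(P_i*,P_{-i}) ≻_i w. -/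
/-- The normal-form manipulation lemma: for a scoring rule with non-increasing score vector,
if voter `i` can manipulate at `P`, then voter `i` can manipulate with the vote `σ` that ranks
the good candidates first (from highest to lowest score in `P₋ᵢ`, ties resolved by tie-breaking
priority) followed by the bad candidates (from lowest to highest score in `P₋ᵢ`, ties resolved by
reverse tie-breaking priority). Here a candidate `c` is good when `c ≻ᵢ w` for the sincere
winner `w`, and bad otherwise. -/
theorem stmt_8 (m n : ℕ) [NeZero m] (s : Fin m → ℕ)
    (hs : ∀ r r' : Fin m, r ≤ r' → s r' ≤ s r)
    (P : Fin n → Pref m) (i : Fin n)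
    (w : Fin m) (hw : w = winner s P)
    (σ : Pref m)
    -- every good candidate is ranked above every bad candidate in `σ`
    (h1 : ∀ c d : Fin m, P i c < P i w → ¬ (P i d < P i w) → σ c < σ d)
    -- good candidates are ordered from highest to lowest score in `P₋ᵢ`,
    -- candidates of equal score being ordered by their tie-breaking priority
    (h2 : ∀ c d : Fin m, P i c < P i w → P i d < P i w →
      (σ c < σ d ↔
        (∑ v ∈ Finset.univ.erase i, s (P v d)) < (∑ v ∈ Finset.univ.erase i, s (P v c)) ∨
        ((∑ v ∈ Finset.univ.erase i, s (P v c)) = (∑ v ∈ Finset.univ.erase i, s (P v d)) ∧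
          c < d)))
    -- bad candidates are ordered from lowest to highest score in `P₋ᵢ`,
    -- candidates of equal score being ordered by reverse tie-breaking priority
    (h3 : ∀ c d : Fin m, ¬ (P i c < P i w) → ¬ (P i d < P i w) →
      (σ c < σ d ↔
        (∑ v ∈ Finset.univ.erase i, s (P v c)) < (∑ v ∈ Finset.univ.erase i, s (P v d)) ∨
        ((∑ v ∈ Finset.univ.erase i, s (P v c)) = (∑ v ∈ Finset.univ.erase i, s (P v d)) ∧
          d < c)))
    (hman : ∃ Q : Pref m, P i (winner s (Function.update P i Q)) < P i w) :
    P i (winner s (Function.update P i σ)) < P i w := by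
  classical
  obtain ⟨Q, hQ⟩ := hman
  set S : Fin m → ℕ := fun c => ∑ v ∈ Finset.univ.erase i, s (P v c) with hSdef
  -- score of an updated profile
  have hupd : ∀ (τ : Pref m) (c : Fin m),
      score s (Function.update P i τ) c = s (τ c) + S c := by
    intro τ c
    rw [score, ← Finset.add_sum_erase _ _ (Finset.mem_univ i)]
    simp only [Function.update_self, hSdef]
    congr 1
    refine Finset.sum_congr rfl fun v hv => ?_
    rw [Function.update_of_ne (Finset.ne_of_mem_erase hv)]
  -- winner facts
  have hwmem : ∀ (R : Fin n → Pref m),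
      ∀ d, score s R d ≤ score s R (winner s R) := by
    intro R
    have := Finset.min'_mem
      (Finset.univ.filter fun c => ∀ d, score s R d ≤ score s R c)
      (by
        obtain ⟨c, -, hc⟩ := Finset.exists_max_image Finset.univ (score s R)
          Finset.univ_nonempty
        exact ⟨c, Finset.mem_filter.mpr ⟨Finset.mem_univ c,
          fun d => hc d (Finset.mem_univ d)⟩⟩)
    rw [Finset.mem_filter] at this
    exact this.2
  have hwle : ∀ (R : Fin n → Pref m) (c : Fin m),
      (∀ d, score s R d ≤ score s R c) → winner s R ≤ c := by
    intro R c hc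
    exact Finset.min'_le _ _ (Finset.mem_filter.mpr ⟨Finset.mem_univ c, hc⟩)
  set x : Fin m := winner s (Function.update P i Q) with hxdef
  by_contra hbad
  set b : Fin m := winner s (Function.update P i σ) with hbdef
  -- Step A: a good candidate `c` strong under σ
  set p0 : Fin m := min (σ x) (Q x) with hp0
  set c : Fin m := σ.symm p0 with hcdef
  have hσc : σ c = p0 := σ.apply_symm_apply p0
  have hcgood : P i c < P i w := by
    by_contra hc
    have := h1 x c hQ hc
    rw [hσc] at this
    exact absurd this (not_lt.mpr (min_le_left _ _))
  have hcx : S x ≤ S c ∧ (S c = S x → c ≤ x) := by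
    rcases eq_or_ne c x with h | h
    · exact ⟨le_of_eq (by rw [h]), fun _ => le_of_eq h⟩
    · have hlt : σ c < σ x := by
        have hple : σ c ≤ σ x := by rw [hσc]; exact min_le_left _ _
        rcases lt_or_eq_of_le hple with h' | h'
        · exact h'
        · exact absurd (σ.injective h') h
      rcases (h2 c x hcgood hQ).mp hlt with h' | h'
      · exact ⟨le_of_lt h', fun he => absurd he (ne_of_gt h')⟩
      · exact ⟨le_of_eq h'.1.symm, fun _ => le_of_lt h'.2⟩
  have hsc : s (Q x) ≤ s (σ c) := by
    refine hs _ _ ?_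
    rw [hσc]; exact min_le_right _ _
  -- Step D: a bad candidate `c'` strong under Q
  have hex : ∃ c', σ b ≤ σ c' ∧ Q c' ≤ σ b := by
    by_contra h
    push_neg at h
    have hcard : (Finset.Ici (σ b)).card ≤ (Finset.Ioi (σ b)).card := by
      apply Finset.card_le_card_of_injOn (fun r => Q (σ.symm r))
      · intro r hr
        rw [Finset.mem_coe, Finset.mem_Ici] at hr
        rw [Finset.mem_coe, Finset.mem_Ioi]
        exact h _ (by simpa using hr)
      · intro a _ a' _ hab
        exact σ.symm.injective (Q.injective hab)
    have hss : (Finset.Ioi (σ b)) ⊂ (Finset.Ici (σ b)) := by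
      refine ⟨Finset.Ioi_subset_Ici_self, fun hsub => ?_⟩
      have := hsub (Finset.mem_Ici.mpr le_rfl)
      simp at this
    exact absurd hcard (not_le.mpr (Finset.card_lt_card hss))
  obtain ⟨c', hc'1, hc'2⟩ := hex
  have hc'bad : ¬ P i c' < P i w := by
    intro hc'
    exact absurd (h1 c' b hc' hbad) (not_lt.mpr hc'1)
  have hc'b : S b ≤ S c' ∧ (S c' = S b → c' ≤ b) := by
    rcases eq_or_ne c' b with h | h
    · exact ⟨le_of_eq (by rw [h]), fun _ => le_of_eq h⟩
    · have hlt : σ b < σ c' := lt_of_le_of_ne hc'1 (fun he => h (σ.injective he.symm))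
      rcases (h3 b c' hbad hc'bad).mp hlt with h' | h'
      · exact ⟨le_of_lt h', fun he => absurd he (ne_of_gt h')⟩
      · exact ⟨le_of_eq h'.1, fun _ => le_of_lt h'.2⟩
  have hsc' : s (σ b) ≤ s (Q c') := hs _ _ hc'2
  -- the inequality chain
  have e1 : s (σ c) + S c ≤ s (σ b) + S b := by
    simpa only [hupd, ← hbdef] using hwmem (Function.update P i σ) c
  have e2 : s (Q c') + S c' ≤ s (Q x) + S x := by
    simpa only [hupd, ← hxdef] using hwmem (Function.update P i Q) c'
  have key1 : s (σ c) + S c = s (Q x) + S x := by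
    have := hcx.1; have := hc'b.1; omega
  have key2 : s (Q c') + S c' = s (σ b) + S b := by
    have := hcx.1; have := hc'b.1; omega
  have keyall : s (σ c) + S c = s (σ b) + S b := by
    have := hcx.1; have := hc'b.1; omega
  have keyQ : s (Q c') + S c' = s (Q x) + S x := by
    have := hcx.1; have := hc'b.1; omega
  have hScx : S c = S x := by have := hcx.1; omega
  have hSc'b : S c' = S b := by have := hc'b.1; omega
  -- tie-breaking
  have hcx' : c ≤ x := hcx.2 hScx
  have hc'b' : c' ≤ b := hc'b.2 hSc'b
  have hbc : b ≤ c := by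
    rw [hbdef]
    apply hwle
    intro d
    rw [hupd, hupd]
    have hd : s (σ d) + S d ≤ s (σ b) + S b := by
      simpa only [hupd, ← hbdef] using hwmem (Function.update P i σ) d
    omega
  have hxc' : x ≤ c' := by
    rw [hxdef]
    apply hwle
    intro d
    rw [hupd, hupd]
    have hd : s (Q d) + S d ≤ s (Q x) + S x := by
      simpa only [hupd, ← hxdef] using hwmem (Function.update P i Q) d
    omega
  have : x = c' := le_antisymm hxc' (le_trans hc'b' (le_trans hbc hcx'))
  exact hc'bad (this ▸ hQ)
end

section
/- Let 1 ≤ i < j ≤ m−1 and let n = 2q+1 be odd with q ≥ 1. Then β_i ≱_PS β_j; that is, there exists a profile of n preferences over m candidates at which the j-Borda rule β_j is manipulable but the i-Borda rule β_i is not manipulable. -/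
namespace Stmt10Aux

def mkPref (m : ℕ) [NeZero m] (f g : ℕ → ℕ) (hf : ∀ x, x < m → f x < m)
    (hg : ∀ x, x < m → g x < m) (hgf : ∀ x, x < m → g (f x) = x)
    (hfg : ∀ x, x < m → f (g x) = x) : Pref m where
  toFun c := ⟨f c.1, hf c.1 c.2⟩
  invFun p := ⟨g p.1, hg p.1 p.2⟩
  left_inv c := Fin.ext (hgf c.1 c.2)
  right_inv p := Fin.ext (hfg p.1 p.2)

@[simp] lemma mkPref_val (m : ℕ) [NeZero m] (f g : ℕ → ℕ) (hf hg hgf hfg) (c : Fin m) :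
    ((mkPref m f g hf hg hgf hfg) c : Fin m).1 = f c.1 := rfl

def sv (m k : ℕ) : Fin m → ℕ := fun r => k - (r : ℕ)

@[simp] lemma sv_apply (m k : ℕ) (r : Fin m) : sv m k r = k - (r : ℕ) := rfl

lemma score_update {m n : ℕ} (s : Fin m → ℕ) (P : Fin n → Pref m) (v : Fin n) (Q : Pref m)
    (c : Fin m) :
    score s (Function.update P v Q) c + s (P v c) = score s P c + s (Q c) := by
  classical
  unfold score
  rw [← Finset.add_sum_erase Finset.univ (fun w => s (Function.update P v Q w c)) (Finset.mem_univ v),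
      ← Finset.add_sum_erase Finset.univ (fun w => s (P w c)) (Finset.mem_univ v)]
  have h1 : ∀ w ∈ Finset.univ.erase v, s (Function.update P v Q w c) = s (P w c) := fun w hw => by
    rw [Function.update_of_ne (Finset.ne_of_mem_erase hw)]
  rw [Finset.sum_congr rfl h1]
  simp only [Function.update_self]
  omega

lemma winner_eq_of_le {m n : ℕ} [NeZero m] (s : Fin m → ℕ) (P : Fin n → Pref m) (w : Fin m)
    (hmax : ∀ c, score s P c ≤ score s P w)
    (hlt : ∀ c, c < w → score s P c < score s P w) :
    winner s P = w := by
  unfold winner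
  apply le_antisymm
  · exact Finset.min'_le _ _ (Finset.mem_filter.mpr ⟨Finset.mem_univ _, hmax⟩)
  · apply Finset.le_min'
    intro y hy
    rcases lt_or_ge y w with h | h
    · exact absurd ((Finset.mem_filter.mp hy).2 w) (not_le.mpr (hlt y h))
    · exact h

lemma winner_mem {m n : ℕ} [NeZero m] (s : Fin m → ℕ) (P : Fin n → Pref m) :
    winner s P ∈ Finset.univ.filter (fun c => ∀ d, score s P d ≤ score s P c) := by
  unfold winner; exact Finset.min'_mem _ _

lemma not_manip_zero {m n : ℕ} [NeZero m] (s : Fin m → ℕ) (P : Fin n → Pref m) (w : Fin m)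
    (hw0 : ∀ c : Fin m, w ≤ c)
    (hw : winner s P = w)
    (H : ∀ (v : Fin n) (Q : Pref m) (c : Fin m), P v c < P v w →
      score s (Function.update P v Q) c ≤ score s (Function.update P v Q) w) :
    ¬ Manipulable (winner s) P := by
  rintro ⟨v, Q, hman⟩
  rw [hw] at hman
  have hcf := winner_mem s (Function.update P v Q)
  have hmax : ∀ d, score s (Function.update P v Q) d ≤
      score s (Function.update P v Q) (winner s (Function.update P v Q)) :=
    (Finset.mem_filter.mp hcf).2
  have h1 := H v Q _ hman
  have hwf : w ∈ Finset.univ.filter (fun c => ∀ d, score s (Function.update P v Q) d ≤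
      score s (Function.update P v Q) c) :=
    Finset.mem_filter.mpr ⟨Finset.mem_univ _, fun d => le_trans (hmax d) h1⟩
  have h2 : winner s (Function.update P v Q) ≤ w := by
    unfold winner; exact Finset.min'_le _ _ hwf
  have h3 : winner s (Function.update P v Q) = w := le_antisymm h2 (hw0 _)
  rw [h3] at hman
  exact lt_irrefl _ hman

lemma not_manip_strict {m n : ℕ} [NeZero m] (s : Fin m → ℕ) (P : Fin n → Pref m) (w : Fin m)
    (hw : winner s P = w)
    (H : ∀ (v : Fin n) (Q : Pref m) (c : Fin m), P v c < P v w →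
      score s (Function.update P v Q) c < score s (Function.update P v Q) w) :
    ¬ Manipulable (winner s) P := by
  rintro ⟨v, Q, hman⟩
  rw [hw] at hman
  have hcf := winner_mem s (Function.update P v Q)
  exact absurd ((Finset.mem_filter.mp hcf).2 w) (not_le.mpr (H v Q _ hman))

def prof3 {m : ℕ} (q : ℕ) (S I B : Pref m) : Fin (2*q+1) → Pref m :=
  fun v => if (v : ℕ) = 0 then S else if (v : ℕ) ≤ q then I else B

def prof2 {m : ℕ} (q : ℕ) (I B : Pref m) : Fin (2*q+1) → Pref m :=
  fun v => if (v : ℕ) < q then I else B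

lemma score_prof3 {m : ℕ} (q : ℕ) (s : Fin m → ℕ) (S I B : Pref m) (c : Fin m) :
    score s (prof3 q S I B) c = s (S c) + q * s (I c) + q * s (B c) := by
  unfold score prof3
  rw [Fin.sum_univ_eq_sum_range (fun x => s ((if x = 0 then S else if x ≤ q then I else B) c)) (2*q+1)]
  rw [Finset.range_eq_Ico,
      ← Finset.sum_Ico_consecutive _ (by omega : (0:ℕ) ≤ q+1) (by omega : q+1 ≤ 2*q+1),
      ← Finset.sum_Ico_consecutive _ (by omega : (0:ℕ) ≤ 1) (by omega : (1:ℕ) ≤ q+1)]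
  have e1 : (∑ x ∈ Finset.Ico 0 1, s ((if x = 0 then S else if x ≤ q then I else B) c)) = s (S c) := by
    rw [Nat.Ico_zero_eq_range, Finset.sum_range_one]
    simp
  have h2 : ∀ x ∈ Finset.Ico 1 (q+1), s ((if x = 0 then S else if x ≤ q then I else B) c) = s (I c) := by
    intro x hx
    rw [Finset.mem_Ico] at hx
    rw [if_neg (by omega), if_pos (by omega)]
  have e2 : (∑ x ∈ Finset.Ico 1 (q+1), s ((if x = 0 then S else if x ≤ q then I else B) c)) = q * s (I c) := by
    rw [Finset.sum_congr rfl h2, Finset.sum_const, Nat.card_Ico, smul_eq_mul]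
    congr 1
  have h3 : ∀ x ∈ Finset.Ico (q+1) (2*q+1), s ((if x = 0 then S else if x ≤ q then I else B) c) = s (B c) := by
    intro x hx
    rw [Finset.mem_Ico] at hx
    rw [if_neg (by omega), if_neg (by omega)]
  have e3 : (∑ x ∈ Finset.Ico (q+1) (2*q+1), s ((if x = 0 then S else if x ≤ q then I else B) c)) = q * s (B c) := by
    rw [Finset.sum_congr rfl h3, Finset.sum_const, Nat.card_Ico, smul_eq_mul,
        show 2*q+1-(q+1) = q by omega]
  rw [e1, e2, e3]

lemma score_prof2 {m : ℕ} (q : ℕ) (s : Fin m → ℕ) (I B : Pref m) (c : Fin m) :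
    score s (prof2 q I B) c = q * s (I c) + (q+1) * s (B c) := by
  unfold score prof2
  rw [Fin.sum_univ_eq_sum_range (fun x => s ((if x < q then I else B) c)) (2*q+1)]
  rw [Finset.range_eq_Ico,
      ← Finset.sum_Ico_consecutive _ (by omega : (0:ℕ) ≤ q) (by omega : q ≤ 2*q+1)]
  have h2 : ∀ x ∈ Finset.Ico 0 q, s ((if x < q then I else B) c) = s (I c) := by
    intro x hx
    rw [Finset.mem_Ico] at hx
    rw [if_pos (by omega)]
  have e2 : (∑ x ∈ Finset.Ico 0 q, s ((if x < q then I else B) c)) = q * s (I c) := by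
    rw [Finset.sum_congr rfl h2, Finset.sum_const, Nat.card_Ico, smul_eq_mul,
        show q - 0 = q by omega]
  have h3 : ∀ x ∈ Finset.Ico q (2*q+1), s ((if x < q then I else B) c) = s (B c) := by
    intro x hx
    rw [Finset.mem_Ico] at hx
    rw [if_neg (by omega)]
  have e3 : (∑ x ∈ Finset.Ico q (2*q+1), s ((if x < q then I else B) c)) = (q+1) * s (B c) := by
    rw [Finset.sum_congr rfl h3, Finset.sum_const, Nat.card_Ico, smul_eq_mul,
        show 2*q+1-q = q+1 by omega]
  rw [e2, e3]

private lemma L2 {q x y a b : ℕ} (hq : 1 ≤ q) (hxy : x ≤ y) (h : a ≤ b + (y - x)) :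
    a + q * x ≤ b + q * y := by
  have h2 : q * y = q * x + q * (y - x) := by
    rw [← Nat.mul_add]
    congr 1
    omega
  have h3 : y - x ≤ q * (y - x) := Nat.le_mul_of_pos_left _ (by omega)
  linarith

-- permutation building blocks
def fS (a x : ℕ) : ℕ := if x = 1 then a else if 2 ≤ x then (if x ≤ a then x - 1 else x) else x
def gS (a x : ℕ) : ℕ := if x = a then 1 else if 1 ≤ x then (if x + 1 ≤ a then x + 1 else x) else x
def fB (m x : ℕ) : ℕ := if x = 0 then 1 else if x = 1 then 0 else if x = m-1 then m-1 else m - x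
def fQ (m x : ℕ) : ℕ := if x = 0 then m-1 else if x = 1 then 0 else if x = m-1 then 1 else m - x
def gQ (m x : ℕ) : ℕ := if x = m-1 then 0 else if x = 0 then 1 else if x = 1 then m-1 else m - x
def fB2 (x : ℕ) : ℕ := if x = 0 then 1 else if x = 1 then 0 else x
def fT (m x : ℕ) : ℕ := if x = 1 then m-1 else if 2 ≤ x then x - 1 else x
def gT (m x : ℕ) : ℕ := if x = m-1 then 1 else if 1 ≤ x then x + 1 else x

lemma fS_spec (a x : ℕ) :
    (x = 1 ∧ fS a x = a) ∨ (2 ≤ x ∧ x ≤ a ∧ fS a x = x - 1) ∨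
    ((x = 0 ∨ (x ≠ 1 ∧ a < x)) ∧ fS a x = x) := by
  unfold fS; split_ifs <;> omega

lemma gS_spec (a x : ℕ) :
    (x = a ∧ gS a x = 1) ∨ (x ≠ a ∧ 1 ≤ x ∧ x + 1 ≤ a ∧ gS a x = x + 1) ∨
    ((x = 0 ∨ (x ≠ a ∧ a ≤ x)) ∧ gS a x = x) := by
  unfold gS; split_ifs <;> omega

lemma fB_spec (m x : ℕ) (hm : 3 ≤ m) (hx : x < m) :
    (x = 0 ∧ fB m x = 1) ∨ (x = 1 ∧ fB m x = 0) ∨ (x = m-1 ∧ fB m x = m-1) ∨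
    (2 ≤ x ∧ x + 2 ≤ m ∧ fB m x = m - x) := by
  unfold fB; split_ifs <;> omega

lemma fQ_spec (m x : ℕ) (hm : 3 ≤ m) (hx : x < m) :
    (x = 0 ∧ fQ m x = m-1) ∨ (x = 1 ∧ fQ m x = 0) ∨ (x = m-1 ∧ fQ m x = 1) ∨
    (2 ≤ x ∧ x + 2 ≤ m ∧ fQ m x = m - x) := by
  unfold fQ; split_ifs <;> omega

lemma gQ_spec (m x : ℕ) (hm : 3 ≤ m) (hx : x < m) :
    (x = m-1 ∧ gQ m x = 0) ∨ (x = 0 ∧ gQ m x = 1) ∨ (x = 1 ∧ gQ m x = m-1) ∨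
    (2 ≤ x ∧ x + 2 ≤ m ∧ gQ m x = m - x) := by
  unfold gQ; split_ifs <;> omega

lemma fB2_spec (x : ℕ) :
    (x = 0 ∧ fB2 x = 1) ∨ (x = 1 ∧ fB2 x = 0) ∨ (2 ≤ x ∧ fB2 x = x) := by
  unfold fB2; split_ifs <;> omega

lemma fT_spec (m x : ℕ) :
    (x = 1 ∧ fT m x = m-1) ∨ (2 ≤ x ∧ fT m x = x - 1) ∨ (x = 0 ∧ fT m x = 0) := by
  unfold fT; split_ifs <;> omega

lemma gT_spec (m x : ℕ) :
    (x = m-1 ∧ gT m x = 1) ∨ (x ≠ m-1 ∧ 1 ≤ x ∧ gT m x = x + 1) ∨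
    (x = 0 ∧ x ≠ m-1 ∧ gT m x = x) := by
  unfold gT; split_ifs <;> omega

def Sperm (m a : ℕ) [NeZero m] (h1 : 1 ≤ a) (h2 : a + 1 < m) : Pref m :=
  mkPref m (fS a) (gS a)
    (by intro x hx; have := fS_spec a x; omega)
    (by intro x hx; have := gS_spec a x; omega)
    (by intro x hx; have s1 := fS_spec a x; have s2 := gS_spec a (fS a x); omega)
    (by intro x hx; have s1 := gS_spec a x; have s2 := fS_spec a (gS a x); omega)

def Bperm (m : ℕ) [NeZero m] (hm : 3 ≤ m) : Pref m :=
  mkPref m (fB m) (fB m)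
    (by intro x hx; have := fB_spec m x hm hx; omega)
    (by intro x hx; have := fB_spec m x hm hx; omega)
    (by intro x hx; have s1 := fB_spec m x hm hx
        have s2 := fB_spec m (fB m x) hm (by omega); omega)
    (by intro x hx; have s1 := fB_spec m x hm hx
        have s2 := fB_spec m (fB m x) hm (by omega); omega)

def Qperm (m : ℕ) [NeZero m] (hm : 3 ≤ m) : Pref m :=
  mkPref m (fQ m) (gQ m)
    (by intro x hx; have := fQ_spec m x hm hx; omega)
    (by intro x hx; have := gQ_spec m x hm hx; omega)
    (by intro x hx; have s1 := fQ_spec m x hm hx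
        have s2 := gQ_spec m (fQ m x) hm (by omega); omega)
    (by intro x hx; have s1 := gQ_spec m x hm hx
        have s2 := fQ_spec m (gQ m x) hm (by omega); omega)

def B2perm (m : ℕ) [NeZero m] (hm : 3 ≤ m) : Pref m :=
  mkPref m fB2 fB2
    (by intro x hx; have := fB2_spec x; omega)
    (by intro x hx; have := fB2_spec x; omega)
    (by intro x hx; have s1 := fB2_spec x; have s2 := fB2_spec (fB2 x); omega)
    (by intro x hx; have s1 := fB2_spec x; have s2 := fB2_spec (fB2 x); omega)

def Tperm (m : ℕ) [NeZero m] (hm : 3 ≤ m) : Pref m :=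
  mkPref m (fT m) (gT m)
    (by intro x hx; have := fT_spec m x; omega)
    (by intro x hx; have := gT_spec m x; omega)
    (by intro x hx; have s1 := fT_spec m x; have s2 := gT_spec m (fT m x); omega)
    (by intro x hx; have s1 := gT_spec m x; have s2 := fT_spec m (gT m x); omega)

@[simp] lemma Sperm_val (m a : ℕ) [NeZero m] (h1 : 1 ≤ a) (h2 : a + 1 < m) (c : Fin m) :
    ((Sperm m a h1 h2) c : Fin m).1 = fS a c.1 := rfl
@[simp] lemma Bperm_val (m : ℕ) [NeZero m] (hm : 3 ≤ m) (c : Fin m) :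
    ((Bperm m hm) c : Fin m).1 = fB m c.1 := rfl
@[simp] lemma Qperm_val (m : ℕ) [NeZero m] (hm : 3 ≤ m) (c : Fin m) :
    ((Qperm m hm) c : Fin m).1 = fQ m c.1 := rfl
@[simp] lemma B2perm_val (m : ℕ) [NeZero m] (hm : 3 ≤ m) (c : Fin m) :
    ((B2perm m hm) c : Fin m).1 = fB2 c.1 := rfl
@[simp] lemma Tperm_val (m : ℕ) [NeZero m] (hm : 3 ≤ m) (c : Fin m) :
    ((Tperm m hm) c : Fin m).1 = fT m c.1 := rfl

lemma prof2_lt {m q : ℕ} (I B : Pref m) (v : Fin (2*q+1)) (h : (v:ℕ) < q) :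
    prof2 q I B v = I := if_pos h
lemma prof2_ge {m q : ℕ} (I B : Pref m) (v : Fin (2*q+1)) (h : ¬ (v:ℕ) < q) :
    prof2 q I B v = B := if_neg h
lemma prof3_0 {m q : ℕ} (S I B : Pref m) (v : Fin (2*q+1)) (h : (v:ℕ) = 0) :
    prof3 q S I B v = S := by unfold prof3; rw [if_pos h]
lemma prof3_mid {m q : ℕ} (S I B : Pref m) (v : Fin (2*q+1)) (h0 : ¬ (v:ℕ) = 0)
    (hle : (v:ℕ) ≤ q) : prof3 q S I B v = I := by unfold prof3; rw [if_neg h0, if_pos hle]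
lemma prof3_top {m q : ℕ} (S I B : Pref m) (v : Fin (2*q+1)) (h0 : ¬ (v:ℕ) = 0)
    (hle : ¬ (v:ℕ) ≤ q) : prof3 q S I B v = B := by unfold prof3; rw [if_neg h0, if_neg hle]

private lemma L3 {q x0 y0 x1 y1 : ℕ} (h1 : x0 + y0 = x1 + y1) (h2 : y0 ≤ y1) :
    q * x0 + (q+1) * y0 ≤ q * x1 + (q+1) * y1 := by
  have e1 : q * x0 + q * y0 = q * x1 + q * y1 := by
    rw [← Nat.mul_add, ← Nat.mul_add, h1]
  have e3 : (q+1) * y0 = q * y0 + y0 := by ring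
  have e4 : (q+1) * y1 = q * y1 + y1 := by ring
  linarith

private lemma L3' {q x0 y0 x1 y1 : ℕ} (h1 : x0 + y0 = x1 + y1) (h2 : y0 < y1) :
    q * x0 + (q+1) * y0 < q * x1 + (q+1) * y1 := by
  have e1 : q * x0 + q * y0 = q * x1 + q * y1 := by
    rw [← Nat.mul_add, ← Nat.mul_add, h1]
  have e3 : (q+1) * y0 = q * y0 + y0 := by ring
  have e4 : (q+1) * y1 = q * y1 + y1 := by ring
  linarith

lemma case12 (m q : ℕ) [NeZero m] (hm : 3 ≤ m) (hq : 1 ≤ q) :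
    ∃ P : Fin (2*q+1) → Pref m,
      Manipulable (kBorda m (2*q+1) 2) P ∧ ¬ Manipulable (kBorda m (2*q+1) 1) P := by
  set c0 : Fin m := ⟨0, by omega⟩ with hc0def
  set c1 : Fin m := ⟨1, by omega⟩ with hc1def
  have hc0v : (c0 : ℕ) = 0 := by rw [hc0def]
  have hc1v : (c1 : ℕ) = 1 := by rw [hc1def]
  have hfB20 : fB2 0 = 1 := rfl
  have hfB21 : fB2 1 = 0 := rfl
  set P : Fin (2*q+1) → Pref m := prof2 q (Equiv.refl (Fin m)) (B2perm m hm) with hPdef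
  have hsc : ∀ (k : ℕ) (c : Fin m), score (sv m k) P c
      = q * (k - (c:ℕ)) + (q+1) * (k - fB2 (c:ℕ)) := by
    intro k c
    rw [hPdef, score_prof2]
    simp only [sv_apply, B2perm_val, Equiv.refl_apply]
  have sc0 : ∀ k : ℕ, score (sv m k) P c0 = q * k + (q+1) * (k-1) := by
    intro k; rw [hsc k c0, hc0v, hfB20, Nat.sub_zero]
  have sc1 : ∀ k : ℕ, score (sv m k) P c1 = q * (k-1) + (q+1) * k := by
    intro k; rw [hsc k c1, hc1v, hfB21, Nat.sub_zero]
  have hmax1 : ∀ (k : ℕ) (c : Fin m), score (sv m k) P c ≤ score (sv m k) P c1 := by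
    intro k c
    rw [hsc k c, sc1 k]
    rcases Nat.lt_or_ge (c:ℕ) 2 with hc | hc
    · rcases Nat.lt_or_ge (c:ℕ) 1 with h0 | h1
      · have h00 : (c:ℕ) = 0 := by omega
        rw [h00, hfB20, Nat.sub_zero]
        exact L3 (by omega) (by omega)
      · have h11 : (c:ℕ) = 1 := by omega
        rw [h11, hfB21, Nat.sub_zero]
    · have hfc : fB2 (c:ℕ) = (c:ℕ) := by have := fB2_spec (c:ℕ); omega
      rw [hfc]
      exact add_le_add (Nat.mul_le_mul le_rfl (by omega)) (Nat.mul_le_mul le_rfl (by omega))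
  have hstrict : ∀ k : ℕ, 1 ≤ k → score (sv m k) P c0 < score (sv m k) P c1 := by
    intro k hk
    rw [sc0 k, sc1 k]
    exact L3' (by omega) (by omega)
  have hlt1 : ∀ (k : ℕ), 1 ≤ k → ∀ c : Fin m, c < c1 →
      score (sv m k) P c < score (sv m k) P c1 := by
    intro k hk c hclt
    have hcv : (c:ℕ) = 0 := by
      have := Fin.lt_def.mp hclt
      omega
    have hceq : c = c0 := Fin.ext (by rw [hcv, hc0v])
    rw [hceq]
    exact hstrict k hk
  have w1 : winner (sv m 1) P = c1 :=
    winner_eq_of_le _ _ _ (hmax1 1) (hlt1 1 (by omega))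
  have w2 : winner (sv m 2) P = c1 :=
    winner_eq_of_le _ _ _ (hmax1 2) (hlt1 2 (by omega))
  refine ⟨P, ?_, ?_⟩
  · -- Manipulable 2-Borda
    set v0 : Fin (2*q+1) := ⟨0, by omega⟩ with hv0def
    have hPv0 : P v0 = Equiv.refl (Fin m) := by
      rw [hPdef]; exact prof2_lt _ _ _ (by rw [hv0def]; omega)
    refine ⟨v0, Tperm m hm, ?_⟩
    show P v0 (winner (sv m 2) (Function.update P v0 (Tperm m hm))) <
      P v0 (winner (sv m 2) P)
    have eup : ∀ c : Fin m, score (sv m 2) (Function.update P v0 (Tperm m hm)) c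
        + (2 - (c:ℕ)) = score (sv m 2) P c + (2 - fT m (c:ℕ)) := by
      intro c
      have e := score_update (sv m 2) P v0 (Tperm m hm) c
      rw [hPv0] at e
      simpa only [sv_apply, Tperm_val, Equiv.refl_apply] using e
    have hfT0 : fT m 0 = 0 := by have := fT_spec m 0; omega
    have hfT1 : fT m 1 = m - 1 := by have := fT_spec m 1; omega
    have e0 := eup c0
    rw [hc0v, hfT0] at e0
    have s20 : score (sv m 2) P c0 = 3*q+1 := by rw [sc0 2]; omega
    have hmax' : ∀ c : Fin m, score (sv m 2) (Function.update P v0 (Tperm m hm)) c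
        ≤ score (sv m 2) (Function.update P v0 (Tperm m hm)) c0 := by
      intro c
      have ec := eup c
      rcases Nat.lt_or_ge (c:ℕ) 2 with hc | hc
      · rcases Nat.lt_or_ge (c:ℕ) 1 with h0 | h1
        · have h00 : c = c0 := Fin.ext (by rw [hc0v]; omega)
          rw [h00]
        · have h11 : c = c1 := Fin.ext (by rw [hc1v]; omega)
          rw [h11] at ec ⊢
          rw [hc1v, hfT1] at ec
          have s21 : score (sv m 2) P c1 = 3*q+2 := by rw [sc1 2]; omega
          omega
      · have hfc : fT m (c:ℕ) = (c:ℕ) - 1 := by have := fT_spec m (c:ℕ); omega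
        have hscc : score (sv m 2) P c = 0 := by
          rw [hsc 2 c]
          have hfc2 : fB2 (c:ℕ) = (c:ℕ) := by have := fB2_spec (c:ℕ); omega
          rw [hfc2, show (2:ℕ) - (c:ℕ) = 0 by omega]
          omega
        rw [hfc, hscc] at ec
        omega
    have hlt' : ∀ c : Fin m, c < c0 →
        score (sv m 2) (Function.update P v0 (Tperm m hm)) c
        < score (sv m 2) (Function.update P v0 (Tperm m hm)) c0 := by
      intro c hclt
      have h := Fin.lt_def.mp hclt
      rw [hc0v] at h
      exact absurd h (by omega)
    have w2' : winner (sv m 2) (Function.update P v0 (Tperm m hm)) = c0 :=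
      winner_eq_of_le _ _ _ hmax' hlt'
    rw [w2', w2, hPv0]
    simp only [Equiv.refl_apply, Fin.lt_def, hc0v, hc1v]
    omega
  · -- not Manipulable plurality
    refine not_manip_strict (sv m 1) P c1 w1 ?_
    intro v Q c hvc
    by_cases hv : (v:ℕ) < q
    · have hPv : P v = Equiv.refl (Fin m) := by rw [hPdef]; exact prof2_lt _ _ _ hv
      rw [hPv] at hvc
      simp only [Equiv.refl_apply] at hvc
      have hcv : (c:ℕ) = 0 := by
        have h := Fin.lt_def.mp hvc
        rw [hc1v] at h
        omega
      have hceq : c = c0 := Fin.ext (by rw [hcv, hc0v])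
      rw [hceq]
      have e0 := score_update (sv m 1) P v Q c0
      have e1 := score_update (sv m 1) P v Q c1
      rw [hPv] at e0 e1
      simp only [sv_apply, Equiv.refl_apply] at e0 e1
      have s10 : score (sv m 1) P c0 = q := by rw [sc0 1]; omega
      have s11 : score (sv m 1) P c1 = q+1 := by rw [sc1 1]; omega
      have b0 : 1 - ((Q c0 : Fin m) : ℕ) ≤ 1 := by omega
      omega
    · have hPv : P v = B2perm m hm := by rw [hPdef]; exact prof2_ge _ _ _ hv
      rw [hPv] at hvc
      have h1 := Fin.lt_def.mp hvc
      simp only [B2perm_val, hc1v, hfB21] at h1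
      exact absurd h1 (by omega)

lemma caseGen (m q i j a : ℕ) [NeZero m] (hm : 3 ≤ m) (hq : 1 ≤ q) (hi : 1 ≤ i)
    (hij : i < j) (hjm : j + 1 ≤ m) (ha1 : 1 ≤ a) (hai : i ≤ a + 1) (haj : a + 2 ≤ j) :
    ∃ P : Fin (2*q+1) → Pref m,
      Manipulable (kBorda m (2*q+1) j) P ∧ ¬ Manipulable (kBorda m (2*q+1) i) P := by
  have ham : a + 1 < m := by omega
  set c0 : Fin m := ⟨0, by omega⟩ with hc0def
  set c1 : Fin m := ⟨1, by omega⟩ with hc1def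
  have hc0v : (c0 : ℕ) = 0 := by rw [hc0def]
  have hc1v : (c1 : ℕ) = 1 := by rw [hc1def]
  have hfS0 : fS a 0 = 0 := by have := fS_spec a 0; omega
  have hfS1 : fS a 1 = a := by have := fS_spec a 1; omega
  have hfB0 : fB m 0 = 1 := by have := fB_spec m 0 hm (by omega); omega
  have hfB1 : fB m 1 = 0 := by have := fB_spec m 1 hm (by omega); omega
  have hfQ0 : fQ m 0 = m-1 := by have := fQ_spec m 0 hm (by omega); omega
  have hfQ1 : fQ m 1 = 0 := by have := fQ_spec m 1 hm (by omega); omega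
  set P : Fin (2*q+1) → Pref m :=
    prof3 q (Sperm m a ha1 ham) (Equiv.refl (Fin m)) (Bperm m hm) with hPdef
  have hsc : ∀ (k : ℕ) (c : Fin m), score (sv m k) P c
      = (k - fS a (c:ℕ)) + q * (k - (c:ℕ)) + q * (k - fB m (c:ℕ)) := by
    intro k c
    rw [hPdef, score_prof3]
    simp only [sv_apply, Sperm_val, Bperm_val, Equiv.refl_apply]
  -- sincere winner is c0 for every k
  have hmax0 : ∀ (k : ℕ) (c : Fin m), score (sv m k) P c ≤ score (sv m k) P c0 := by
    intro k c
    rw [hsc k c, hsc k c0, hc0v, hfS0, hfB0]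
    have hcm : (c:ℕ) < m := c.2
    rcases Nat.lt_or_ge (c:ℕ) 2 with hc | hc
    · rcases Nat.lt_or_ge (c:ℕ) 1 with h0 | h1
      · have h00 : (c:ℕ) = 0 := by omega
        rw [h00, hfS0, hfB0]
      · have h11 : (c:ℕ) = 1 := by omega
        rw [h11, hfS1, hfB1]
        have hle : k - a ≤ k - 0 := by omega
        linarith
    · have h1 : 1 ≤ fS a (c:ℕ) := by have := fS_spec a (c:ℕ); omega
      have h2 : 1 ≤ fB m (c:ℕ) := by have := fB_spec m (c:ℕ) hm hcm; omega
      have e1 : k - fS a (c:ℕ) ≤ k - 0 := by omega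
      have e2 : q * (k - (c:ℕ)) ≤ q * (k - 0) := Nat.mul_le_mul le_rfl (by omega)
      have e3 : q * (k - fB m (c:ℕ)) ≤ q * (k - 1) := Nat.mul_le_mul le_rfl (by omega)
      exact add_le_add (add_le_add e1 e2) e3
  have hlt0 : ∀ (k : ℕ) (c : Fin m), c < c0 →
      score (sv m k) P c < score (sv m k) P c0 := by
    intro k c hclt
    have h := Fin.lt_def.mp hclt
    rw [hc0v] at h
    exact absurd h (by omega)
  have wI : winner (sv m i) P = c0 := winner_eq_of_le _ _ _ (hmax0 i) (hlt0 i)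
  have wJ : winner (sv m j) P = c0 := winner_eq_of_le _ _ _ (hmax0 j) (hlt0 j)
  refine ⟨P, ?_, ?_⟩
  · -- Manipulable j-Borda
    set vstar : Fin (2*q+1) := ⟨q+1, by omega⟩ with hvsdef
    have hvsv : (vstar : ℕ) = q + 1 := by rw [hvsdef]
    have hPvs : P vstar = Bperm m hm := by
      rw [hPdef]
      exact prof3_top _ _ _ _ (by rw [hvsv]; omega) (by rw [hvsv]; omega)
    refine ⟨vstar, Qperm m hm, ?_⟩
    show P vstar (winner (sv m j) (Function.update P vstar (Qperm m hm))) <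
      P vstar (winner (sv m j) P)
    have eup : ∀ c : Fin m, score (sv m j) (Function.update P vstar (Qperm m hm)) c
        + (j - fB m (c:ℕ)) = score (sv m j) P c + (j - fQ m (c:ℕ)) := by
      intro c
      have e := score_update (sv m j) P vstar (Qperm m hm) c
      rw [hPvs] at e
      simpa only [sv_apply, Bperm_val, Qperm_val] using e
    -- key inequalities on sincere scores
    have key : ∀ c : Fin m, score (sv m j) P c + (j - fQ m (c:ℕ))
        ≤ score (sv m j) P c1 + (j - fB m (c:ℕ)) := by
      intro c
      rw [hsc j c, hsc j c1, hc1v, hfS1, hfB1]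
      have hcm : (c:ℕ) < m := c.2
      rcases Nat.lt_or_ge (c:ℕ) 2 with hc | hc
      · rcases Nat.lt_or_ge (c:ℕ) 1 with h0 | h1
        · have h00 : (c:ℕ) = 0 := by omega
          rw [h00, hfS0, hfB0, hfQ0]
          have hz : j - (m-1) = 0 := by omega
          rw [hz]
          have h2 : (j - 0) + 0 ≤ (j - a) + (j - 1) := by omega
          linarith
        · have h11 : (c:ℕ) = 1 := by omega
          rw [h11, hfS1, hfB1, hfQ1]
      · rcases Nat.lt_or_ge (c:ℕ) (m-1) with hcm1 | hcm1
        · have hfBc : fB m (c:ℕ) = m - (c:ℕ) := by have := fB_spec m (c:ℕ) hm hcm; omega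
          have hfQc : fQ m (c:ℕ) = m - (c:ℕ) := by have := fQ_spec m (c:ℕ) hm hcm; omega
          have hfSc : ((c:ℕ) ≤ a ∧ fS a (c:ℕ) = (c:ℕ) - 1) ∨ (a < (c:ℕ) ∧ fS a (c:ℕ) = (c:ℕ)) := by
            have := fS_spec a (c:ℕ); omega
          rw [hfBc, hfQc]
          have hL := L2 (q := q) (x := (j - (c:ℕ)) + (j - (m - (c:ℕ))))
            (y := (j - 1) + (j - 0)) (a := j - fS a (c:ℕ))
            (b := j - a) hq (by omega) (by omega)
          have d1 : q * ((j - (c:ℕ)) + (j - (m - (c:ℕ))))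
              = q * (j - (c:ℕ)) + q * (j - (m - (c:ℕ))) := Nat.mul_add q _ _
          have d2 : q * ((j - 1) + (j - 0)) = q * (j - 1) + q * (j - 0) := Nat.mul_add q _ _
          linarith
        · have hcv : (c:ℕ) = m-1 := by omega
          have hfSm : fS a (m-1) = m-1 := by have := fS_spec a (m-1); omega
          have hfBm : fB m (m-1) = m-1 := by have := fB_spec m (m-1) hm (by omega); omega
          have hfQm : fQ m (m-1) = 1 := by have := fQ_spec m (m-1) hm (by omega); omega
          rw [hcv, hfSm, hfBm, hfQm]
          have hz : j - (m-1) = 0 := by omega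
          rw [hz]
          simp only [Nat.mul_zero]
          have h3 : (j - 1) ≤ q * (j - 1) := Nat.le_mul_of_pos_left _ (by omega)
          have n1 : 0 ≤ j - a := Nat.zero_le _
          have n2 : 0 ≤ q * (j - 0) := Nat.zero_le _
          linarith
    have key0 : score (sv m j) P c0 + (j - fQ m 0)
        < score (sv m j) P c1 + (j - fB m 0) := by
      rw [hsc j c0, hsc j c1, hc0v, hc1v, hfS0, hfS1, hfB0, hfB1, hfQ0]
      have hz : j - (m-1) = 0 := by omega
      rw [hz]
      have h2 : (j - 0) + 0 < (j - a) + (j - 1) := by omega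
      linarith
    have hmax' : ∀ c : Fin m, score (sv m j) (Function.update P vstar (Qperm m hm)) c
        ≤ score (sv m j) (Function.update P vstar (Qperm m hm)) c1 := by
      intro c
      have e1 := eup c
      have e2 := eup c1
      have k1 := key c
      rw [hc1v, hfB1, hfQ1] at e2
      have hbb : fB m (c:ℕ) ≤ m - 1 := by
        have := fB_spec m (c:ℕ) hm c.2; omega
      omega
    have hlt' : ∀ c : Fin m, c < c1 →
        score (sv m j) (Function.update P vstar (Qperm m hm)) c
        < score (sv m j) (Function.update P vstar (Qperm m hm)) c1 := by
      intro c hclt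
      have hcv : (c:ℕ) = 0 := by
        have h := Fin.lt_def.mp hclt
        rw [hc1v] at h
        omega
      have hceq : c = c0 := Fin.ext (by rw [hcv, hc0v])
      rw [hceq]
      have e1 := eup c0
      have e2 := eup c1
      rw [hc0v] at e1
      rw [hc1v, hfB1, hfQ1] at e2
      omega
    have wJ' : winner (sv m j) (Function.update P vstar (Qperm m hm)) = c1 :=
      winner_eq_of_le _ _ _ hmax' hlt'
    rw [wJ', wJ, hPvs]
    simp only [Fin.lt_def, Bperm_val, hc0v, hc1v, hfB0, hfB1]
    omega
  · -- not Manipulable i-Borda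
    refine not_manip_zero (sv m i) P c0 ?_ wI ?_
    · intro c
      exact Fin.le_def.mpr (by rw [hc0v]; omega)
    · intro v Q c hvc
      by_cases hv0 : (v:ℕ) = 0
      · have hPv : P v = Sperm m a ha1 ham := by rw [hPdef]; exact prof3_0 _ _ _ _ hv0
        rw [hPv] at hvc
        have h := Fin.lt_def.mp hvc
        simp only [Sperm_val, hc0v, hfS0] at h
        exact absurd h (by omega)
      · by_cases hvq : (v:ℕ) ≤ q
        · have hPv : P v = Equiv.refl (Fin m) := by
            rw [hPdef]; exact prof3_mid _ _ _ _ hv0 hvq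
          rw [hPv] at hvc
          simp only [Equiv.refl_apply] at hvc
          have h := Fin.lt_def.mp hvc
          rw [hc0v] at h
          exact absurd h (by omega)
        · have hPv : P v = Bperm m hm := by rw [hPdef]; exact prof3_top _ _ _ _ hv0 hvq
          rw [hPv] at hvc
          have h := Fin.lt_def.mp hvc
          simp only [Bperm_val, hc0v, hfB0] at h
          have hcv1 : (c:ℕ) = 1 := by
            have := fB_spec m (c:ℕ) hm c.2; omega
          have hceq : c = c1 := Fin.ext (by rw [hcv1, hc1v])
          rw [hceq]
          have e1 := score_update (sv m i) P v Q c1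
          have e0 := score_update (sv m i) P v Q c0
          rw [hPv] at e1 e0
          simp only [sv_apply, Bperm_val, hc0v, hc1v, hfB0, hfB1] at e1 e0
          have keyi : score (sv m i) P c1 + (i - 1) ≤ score (sv m i) P c0 := by
            rw [hsc i c1, hsc i c0, hc0v, hc1v, hfS0, hfS1, hfB0, hfB1]
            have hia : (i - a) + (i - 1) ≤ i - 0 := by omega
            linarith
          have b1 : i - ((Q c1 : Fin m) : ℕ) ≤ i - 0 := by omega
          omega

end Stmt10Aux

/-- For `1 ≤ i < j ≤ m-1` and `n = 2q+1` odd with `q ≥ 1`: `β_i ≱_PS β_j`. -/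
theorem stmt_10 (m n q i j : ℕ) [NeZero m] (hi : 1 ≤ i) (hij : i < j) (hj : j ≤ m - 1)
    (hq : 1 ≤ q) (hn : n = 2 * q + 1) :
    ∃ P : Fin n → Pref m,
      Manipulable (kBorda m n j) P ∧ ¬ Manipulable (kBorda m n i) P := by
  subst hn
  have hm : 3 ≤ m := by omega
  by_cases hc : i = 1 ∧ j = 2
  · obtain ⟨h1, h2⟩ := hc
    subst h1; subst h2
    exact Stmt10Aux.case12 m q hm hq
  · have hj3 : 3 ≤ j := by
      by_cases h1 : i = 1
      · rcases Nat.lt_or_ge j 3 with h | h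
        · exact absurd ⟨h1, by omega⟩ hc
        · exact h
      · omega
    exact Stmt10Aux.caseGen m q i j (if i = 1 then 1 else i - 1) hm hq hi hij (by omega)
      (by split_ifs <;> omega) (by split_ifs <;> omega) (by split_ifs <;> omega)
end

section
/- Let 1 ≤ i < j ≤ m−1 and let n ≥ 2. Then β_i ≱_PS β_j; that is, there exists a profile of n preferences over m candidates at which the j-Borda rule β_j is manipulable but the i-Borda rule β_i is not manipulable. -/
namespace S11

lemma winner_mem {m n : ℕ} [NeZero m] (s : Fin m → ℕ) (P : Fin n → Pref m) :
    winner s P ∈ Finset.univ.filter fun c => ∀ e, score s P e ≤ score s P c := by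
  unfold winner
  exact Finset.min'_mem _ _

lemma winner_isMax {m n : ℕ} [NeZero m] (s : Fin m → ℕ) (P : Fin n → Pref m) :
    ∀ e, score s P e ≤ score s P (winner s P) := by
  have h := winner_mem s P
  rw [Finset.mem_filter] at h
  exact h.2

lemma winner_le {m n : ℕ} [NeZero m] (s : Fin m → ℕ) (P : Fin n → Pref m) (c : Fin m)
    (hc : ∀ e, score s P e ≤ score s P c) : winner s P ≤ c := by
  unfold winner
  exact Finset.min'_le _ _ (Finset.mem_filter.mpr ⟨Finset.mem_univ c, hc⟩)

lemma winner_eq_bot {m n : ℕ} [NeZero m] (s : Fin m → ℕ) (P : Fin n → Pref m) (c0 : Fin m)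
    (h0 : (c0 : ℕ) = 0) (hc : ∀ e, score s P e ≤ score s P c0) : winner s P = c0 := by
  have h := winner_le s P c0 hc
  rw [Fin.le_def] at h
  apply Fin.ext
  omega

lemma winner_ne {m n : ℕ} [NeZero m] (s : Fin m → ℕ) (P : Fin n → Pref m) (b c : Fin m)
    (hbc : (b : ℕ) < (c : ℕ)) (h : score s P c ≤ score s P b) : winner s P ≠ c := by
  intro he
  have h1 : score s P b ≤ score s P c := by
    have := winner_isMax s P b
    rwa [he] at this
  have hb : ∀ e, score s P e ≤ score s P b := by
    intro e
    have := winner_isMax s P e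
    rw [he] at this
    omega
  have h2 := winner_le s P b hb
  rw [he, Fin.le_def] at h2
  omega

lemma winner_eq_one {m n : ℕ} [NeZero m] (s : Fin m → ℕ) (P : Fin n → Pref m) (c0 c1 : Fin m)
    (h0 : (c0 : ℕ) = 0) (h1 : (c1 : ℕ) = 1)
    (hmax : ∀ e, score s P e ≤ score s P c1) (hlt : score s P c0 < score s P c1) :
    winner s P = c1 := by
  have hle := winner_le s P c1 hmax
  rw [Fin.le_def] at hle
  have hne : winner s P ≠ c0 := by
    intro he
    have := hmax c0
    rw [← he] at hlt
    have := winner_isMax s P c1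
    omega
  rw [Ne, Fin.ext_iff] at hne
  apply Fin.ext
  omega

lemma score_split {m n : ℕ} (s : Fin m → ℕ) (P : Fin n → Pref m) (v : Fin n) (Q : Pref m)
    (c : Fin m) :
    score s (Function.update P v Q) c + s (P v c) = score s P c + s (Q c) := by
  unfold score
  have h1 : ∀ u : Fin n, s (Function.update P v Q u c) =
      Function.update (fun u : Fin n => s (P u c)) v (s (Q c)) u := by
    intro u
    by_cases h : u = v
    · subst h; simp
    · simp [Function.update_of_ne h]
  rw [Finset.sum_congr rfl fun u _ => h1 u,
    Finset.sum_update_of_mem (Finset.mem_univ v)]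
  rw [← Finset.add_sum_erase Finset.univ (fun u : Fin n => s (P u c)) (Finset.mem_univ v),
    Finset.erase_eq]
  ring

lemma score_profile {m : ℕ} (s : Fin m → ℕ) (B0 B1 B2 : Pref m) (x y : ℕ) (c : Fin m) :
    score s (fun v : Fin (1 + x + y) =>
      if (v : ℕ) = 0 then B0 else if (v : ℕ) ≤ x then B1 else B2) c
      = s (B0 c) + x * s (B1 c) + y * s (B2 c) := by
  unfold score
  rw [Fin.sum_univ_eq_sum_range
    (fun t => s ((if t = 0 then B0 else if t ≤ x then B1 else B2) c))]
  rw [Finset.range_eq_Ico]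
  rw [← Finset.sum_Ico_consecutive _ (by omega : 0 ≤ 1 + x) (by omega : 1 + x ≤ 1 + x + y)]
  rw [← Finset.sum_Ico_consecutive _ (by omega : 0 ≤ 1) (by omega : 1 ≤ 1 + x)]
  have e1 : ∑ t ∈ Finset.Ico 0 1,
      s ((if t = 0 then B0 else if t ≤ x then B1 else B2) c) = s (B0 c) := by
    simp
  have e2 : ∑ t ∈ Finset.Ico 1 (1 + x),
      s ((if t = 0 then B0 else if t ≤ x then B1 else B2) c) = x * s (B1 c) := by
    have hc2 : ∀ t ∈ Finset.Ico 1 (1 + x),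
        s ((if t = 0 then B0 else if t ≤ x then B1 else B2) c) = s (B1 c) := by
      intro t ht
      rw [Finset.mem_Ico] at ht
      rw [if_neg (by omega), if_pos (by omega)]
    rw [Finset.sum_congr rfl hc2, Finset.sum_const, Nat.card_Ico, smul_eq_mul]
    congr 1
    omega
  have e3 : ∑ t ∈ Finset.Ico (1 + x) (1 + x + y),
      s ((if t = 0 then B0 else if t ≤ x then B1 else B2) c) = y * s (B2 c) := by
    have hc3 : ∀ t ∈ Finset.Ico (1 + x) (1 + x + y),
        s ((if t = 0 then B0 else if t ≤ x then B1 else B2) c) = s (B2 c) := by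
      intro t ht
      rw [Finset.mem_Ico] at ht
      rw [if_neg (by omega), if_neg (by omega)]
    rw [Finset.sum_congr rfl hc3, Finset.sum_const, Nat.card_Ico, smul_eq_mul]
    congr 1
    omega
  rw [e1, e2, e3]


lemma mul_eq_mul_pred_add (a b : ℕ) (hb : 1 ≤ b) : a * b = a * (b - 1) + a := by
  have h : b - 1 + 1 = b := by omega
  calc a * b = a * ((b - 1) + 1) := by rw [h]
    _ = a * (b - 1) + a := by ring

lemma pred_mul_add (a b : ℕ) (ha : 1 ≤ a) : a * b = (a - 1) * b + b := by
  have h : a - 1 + 1 = a := by omega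
  calc a * b = ((a - 1) + 1) * b := by rw [h]
    _ = (a - 1) * b + b := by ring

lemma flavor0 (m i j d x y δ : ℕ) [NeZero m]
    (hd1 : 1 ≤ d) (hdi : d ≤ i) (hij : i < j) (hjm : j + 1 ≤ m)
    (hδ : δ ≤ 1) (hyx : y = x + δ) (hy : 1 ≤ y)
    (hC1 : i + δ ≤ d + 1) (hC2 : d + 2 ≤ j + δ)
    (n : ℕ) (hn : n = 1 + x + y) :
    ∃ P : Fin n → Pref m,
      Manipulable (kBorda m n j) P ∧ ¬ Manipulable (kBorda m n i) P := by
  subst hn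
  have hj2 : 2 ≤ j := by omega
  have hm3 : 3 ≤ m := by omega
  obtain ⟨c0, hv0⟩ : ∃ c : Fin m, (c : ℕ) = 0 := ⟨⟨0, by omega⟩, rfl⟩
  obtain ⟨c1, hv1⟩ : ∃ c : Fin m, (c : ℕ) = 1 := ⟨⟨1, by omega⟩, rfl⟩
  obtain ⟨cd, hvd⟩ : ∃ c : Fin m, (c : ℕ) = d := ⟨⟨d, by omega⟩, rfl⟩
  obtain ⟨pmd, hvpmd⟩ : ∃ c : Fin m, (c : ℕ) = m - 1 - d := ⟨⟨m - 1 - d, by omega⟩, rfl⟩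
  set A : Pref m := Equiv.swap c1 cd with hA
  set X : Pref m := Equiv.refl (Fin m) with hX
  set Y : Pref m := Equiv.swap c0 c1 with hY
  set Q : Pref m := A.trans (Fin.revPerm.trans (Equiv.swap pmd c0)) with hQ
  set P : Fin (1 + x + y) → Pref m :=
    fun v => if (v : ℕ) = 0 then A else if (v : ℕ) ≤ x then X else Y with hP
  -- permutation evaluations
  have hA0 : A c0 = c0 :=
    Equiv.swap_apply_of_ne_of_ne (by rw [Ne, Fin.ext_iff]; omega)
      (by rw [Ne, Fin.ext_iff]; omega)
  have hA1 : A c1 = cd := Equiv.swap_apply_left _ _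
  have hAd : A cd = c1 := Equiv.swap_apply_right _ _
  have hAf : ∀ e : Fin m, (e : ℕ) ≠ 1 → (e : ℕ) ≠ d → A e = e := by
    intro e h1 h2
    exact Equiv.swap_apply_of_ne_of_ne (by rw [Ne, Fin.ext_iff]; omega)
      (by rw [Ne, Fin.ext_iff]; omega)
  have hApos : ∀ e : Fin m, (e : ℕ) ≠ 0 → 1 ≤ ((A e : Fin m) : ℕ) := by
    intro e he
    have h : A e ≠ c0 := by
      intro h
      have h2 := A.injective (h.trans hA0.symm)
      rw [h2] at he
      omega
    rw [Ne, Fin.ext_iff] at h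
    omega
  have hX0 : ∀ e : Fin m, X e = e := fun e => rfl
  have hY0 : Y c0 = c1 := Equiv.swap_apply_left _ _
  have hY1 : Y c1 = c0 := Equiv.swap_apply_right _ _
  have hYf : ∀ e : Fin m, (e : ℕ) ≠ 0 → (e : ℕ) ≠ 1 → Y e = e := by
    intro e h0 h1
    exact Equiv.swap_apply_of_ne_of_ne (by rw [Ne, Fin.ext_iff]; omega)
      (by rw [Ne, Fin.ext_iff]; omega)
  -- Q evaluations
  have hQdef : ∀ e : Fin m, Q e = Equiv.swap pmd c0 (Fin.rev (A e)) := fun e => rfl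
  have hrev : ∀ r : Fin m, ((Fin.rev r : Fin m) : ℕ) = m - 1 - (r : ℕ) := by
    intro r
    rw [Fin.val_rev]
    omega
  have hQ0 : ((Q c0 : Fin m) : ℕ) = m - 1 := by
    rw [hQdef, hA0]
    rw [Equiv.swap_apply_of_ne_of_ne (by rw [Ne, Fin.ext_iff, hrev]; omega)
      (by rw [Ne, Fin.ext_iff, hrev]; omega)]
    rw [hrev]
    omega
  have hQ1 : Q c1 = c0 := by
    rw [hQdef, hA1]
    have h : Fin.rev cd = pmd := by
      apply Fin.ext
      rw [hrev]
      omega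
    rw [h, Equiv.swap_apply_left]
  have hQd : 2 ≤ d → ((Q cd : Fin m) : ℕ) = m - 2 := by
    intro hd2
    rw [hQdef, hAd]
    rw [Equiv.swap_apply_of_ne_of_ne (by rw [Ne, Fin.ext_iff, hrev]; omega)
      (by rw [Ne, Fin.ext_iff, hrev]; omega)]
    rw [hrev]
    omega
  have hQm : ∀ e : Fin m, (e : ℕ) = m - 1 → ((Q e : Fin m) : ℕ) = m - 1 - d := by
    intro e he
    rw [hQdef, hAf e (by omega) (by omega)]
    have h : Fin.rev e = c0 := by
      apply Fin.ext
      rw [hrev]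
      omega
    rw [h, Equiv.swap_apply_right]
    omega
  have hQf : ∀ e : Fin m, 2 ≤ (e : ℕ) → (e : ℕ) ≠ d → (e : ℕ) ≠ m - 1 →
      ((Q e : Fin m) : ℕ) = m - 1 - (e : ℕ) := by
    intro e h2 hed hem
    rw [hQdef, hAf e (by omega) hed]
    rw [Equiv.swap_apply_of_ne_of_ne (by rw [Ne, Fin.ext_iff, hrev]; omega)
      (by rw [Ne, Fin.ext_iff, hrev]; omega)]
    exact hrev e
  -- profile ballots at voters
  have hPY : ∀ v : Fin (1 + x + y), ¬ ((v : ℕ) = 0) → ¬ ((v : ℕ) ≤ x) → P v = Y := by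
    intro v h0 hx
    simp only [hP, if_neg h0, if_neg hx]
  -- score formulas
  have hs0 : ∀ k : ℕ, score (fun r : Fin m => k - (r : ℕ)) P c0 = k + x * k + y * (k - 1) := by
    intro k
    rw [hP, score_profile, hA0, hX0, hY0]
    simp only [hv0, hv1, Nat.sub_zero]
  have hs1 : ∀ k : ℕ,
      score (fun r : Fin m => k - (r : ℕ)) P c1 = (k - d) + x * (k - 1) + y * k := by
    intro k
    rw [hP, score_profile, hA1, hX0, hY1]
    simp only [hv0, hv1, hvd, Nat.sub_zero]
  have hsfe : ∀ k : ℕ, ∀ e : Fin m, 2 ≤ (e : ℕ) →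
      score (fun r : Fin m => k - (r : ℕ)) P e
        = (k - ((A e : Fin m) : ℕ)) + x * (k - (e : ℕ)) + y * (k - (e : ℕ)) := by
    intro k e he
    rw [hP, score_profile, hX0, hYf e (by omega) (by omega)]
  have hsf : ∀ k : ℕ, 1 ≤ k → ∀ e : Fin m, 2 ≤ (e : ℕ) →
      score (fun r : Fin m => k - (r : ℕ)) P e ≤ (k - 1) + x * (k - 1) + y * (k - 1) := by
    intro k hk e he
    rw [hsfe k e he]
    have b1 : k - ((A e : Fin m) : ℕ) ≤ k - 1 := by
      have := hApos e (by omega)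
      omega
    have b2 : k - (e : ℕ) ≤ k - 1 := by omega
    exact Nat.add_le_add (Nat.add_le_add b1 (Nat.mul_le_mul le_rfl b2)) (Nat.mul_le_mul le_rfl b2)
  -- sincere winner is c0 under any k-Borda with d ≤ k
  have hw0 : ∀ k : ℕ, d ≤ k → winner (fun r : Fin m => k - (r : ℕ)) P = c0 := by
    intro k hk
    apply winner_eq_bot _ _ c0 hv0
    intro e
    rcases Nat.lt_or_ge (e : ℕ) 1 with h | h
    · have he : e = c0 := Fin.ext (by omega)
      rw [he]
    rcases Nat.lt_or_ge (e : ℕ) 2 with h2 | h2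
    · have he : e = c1 := Fin.ext (by omega)
      rw [he, hs1 k, hs0 k]
      have m1 : x * k = x * (k - 1) + x := mul_eq_mul_pred_add x k (by omega)
      have m2 : y * k = y * (k - 1) + y := mul_eq_mul_pred_add y k (by omega)
      omega
    · refine le_trans (hsf k (by omega) e h2) ?_
      rw [hs0 k]
      have m1 : x * k = x * (k - 1) + x := mul_eq_mul_pred_add x k (by omega)
      omega
  refine ⟨P, ?_, ?_⟩
  · -- Manipulable (kBorda m _ j) P
    obtain ⟨vL, hvL⟩ : ∃ v : Fin (1 + x + y), (v : ℕ) = x + y := ⟨⟨x + y, by omega⟩, rfl⟩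
    refine ⟨vL, Q, ?_⟩
    have hvY : P vL = Y := hPY vL (by omega) (by omega)
    set P' := Function.update P vL Q with hP'
    have hsp : ∀ e : Fin m,
        score (fun r : Fin m => j - (r : ℕ)) P' e + (j - ((Y e : Fin m) : ℕ))
          = score (fun r : Fin m => j - (r : ℕ)) P e + (j - ((Q e : Fin m) : ℕ)) := by
      intro e
      have h := score_split (fun r : Fin m => j - (r : ℕ)) P vL Q e
      rw [hvY] at h
      exact h
    have hs1' : score (fun r : Fin m => j - (r : ℕ)) P' c1
        = (j - d) + x * (j - 1) + y * j := by
      have h := hsp c1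
      rw [hY1, hQ1, hs1 j] at h
      rw [hv0] at h
      omega
    have hs0' : score (fun r : Fin m => j - (r : ℕ)) P' c0 + (j - 1)
        = j + x * j + y * (j - 1) := by
      have h := hsp c0
      rw [hY0, hQ0, hs0 j] at h
      rw [hv1] at h
      omega
    have hlt' : score (fun r : Fin m => j - (r : ℕ)) P' c0
        < score (fun r : Fin m => j - (r : ℕ)) P' c1 := by
      rw [hs1']
      have m1 : x * j = x * (j - 1) + x := mul_eq_mul_pred_add x j (by omega)
      have m2 : y * j = y * (j - 1) + y := mul_eq_mul_pred_add y j (by omega)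
      omega
    have hw1 : winner (fun r : Fin m => j - (r : ℕ)) P' = c1 := by
      apply winner_eq_one _ _ c0 c1 hv0 hv1 _ hlt'
      intro e
      rcases Nat.lt_or_ge (e : ℕ) 1 with h | h
      · have he : e = c0 := Fin.ext (by omega)
        rw [he]
        exact hlt'.le
      rcases Nat.lt_or_ge (e : ℕ) 2 with h2 | h2
      · have he : e = c1 := Fin.ext (by omega)
        rw [he]
      -- filler
      have hYe : Y e = e := hYf e (by omega) (by omega)
      have hE := hsp e
      rw [hYe] at hE
      rw [hsfe j e h2] at hE
      have hPB : (j - ((A e : Fin m) : ℕ)) + (j - ((Q e : Fin m) : ℕ)) ≤ j := by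
        by_cases hed : (e : ℕ) = d
        · have hd2 : 2 ≤ d := by omega
          have he' : e = cd := Fin.ext (by omega)
          rw [he', hAd, hv1, hQd hd2]
          omega
        by_cases hem : (e : ℕ) = m - 1
        · rw [hAf e (by omega) hed, hQm e hem]
          omega
        · rw [hAf e (by omega) hed, hQf e h2 hed hem]
          omega
      rw [hs1']
      have hyu : y * (j - (e : ℕ)) = (y - 1) * (j - (e : ℕ)) + (j - (e : ℕ)) :=
        pred_mul_add y (j - (e : ℕ)) hy
      have hxu : x * (j - (e : ℕ)) ≤ x * (j - 1) := Nat.mul_le_mul le_rfl (by omega)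
      have hyu2 : (y - 1) * (j - (e : ℕ)) ≤ (y - 1) * (j - 1) := Nat.mul_le_mul le_rfl (by omega)
      have hyj1 : y * j = (y - 1) * j + j := pred_mul_add y j hy
      have hyj2 : (y - 1) * j = (y - 1) * (j - 1) + (y - 1) := mul_eq_mul_pred_add (y - 1) j (by omega)
      omega
    -- final goal for manipulability
    have e1 : kBorda m (1 + x + y) j P' = c1 := hw1
    have e2 : kBorda m (1 + x + y) j P = c0 := hw0 j (by omega)
    show P vL (kBorda m (1 + x + y) j P') < P vL (kBorda m (1 + x + y) j P)
    rw [e1, e2, hvY, hY1, hY0]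
    rw [Fin.lt_def]
    omega
  · -- not Manipulable (kBorda m _ i) P
    rintro ⟨v, Q', hlt⟩
    simp only [kBorda] at hlt
    rw [hw0 i hdi] at hlt
    by_cases hv0' : (v : ℕ) = 0
    · have hPv : P v = A := by simp only [hP, if_pos hv0']
      rw [hPv, hA0] at hlt
      rw [Fin.lt_def, hv0] at hlt
      omega
    by_cases hvx : (v : ℕ) ≤ x
    · have hPv : P v = X := by simp only [hP, if_neg hv0', if_pos hvx]
      rw [hPv] at hlt
      simp only [hX0] at hlt
      rw [Fin.lt_def, hv0] at hlt
      omega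
    · have hPv : P v = Y := hPY v hv0' hvx
      rw [hPv, hY0] at hlt
      set P'' := Function.update P v Q' with hP''
      have hw'' : winner (fun r : Fin m => i - (r : ℕ)) P'' = c1 := by
        have hval : ((Y (winner (fun r : Fin m => i - (r : ℕ)) P'') : Fin m) : ℕ) = 0 := by
          rw [Fin.lt_def, hv1] at hlt
          omega
        have h1 : Y (winner (fun r : Fin m => i - (r : ℕ)) P'') = c0 := Fin.ext (by rw [hval, hv0])
        have h2 := congrArg Y.symm h1
        rw [Equiv.symm_apply_apply] at h2
        have h3 : Y.symm c0 = c1 := by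
          rw [hY, Equiv.symm_swap]
          exact Equiv.swap_apply_left _ _
        rw [h3] at h2
        exact h2
      have hsp0 : score (fun r : Fin m => i - (r : ℕ)) P'' c0 + (i - ((c1 : Fin m) : ℕ))
          = (i + x * i + y * (i - 1)) + (i - ((Q' c0 : Fin m) : ℕ)) := by
        have h := score_split (fun r : Fin m => i - (r : ℕ)) P v Q' c0
        rw [hPv, hY0, hs0 i] at h
        exact h
      have hsp1 : score (fun r : Fin m => i - (r : ℕ)) P'' c1 + (i - ((c0 : Fin m) : ℕ))
          = ((i - d) + x * (i - 1) + y * i) + (i - ((Q' c1 : Fin m) : ℕ)) := by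
        have h := score_split (fun r : Fin m => i - (r : ℕ)) P v Q' c1
        rw [hPv, hY1, hs1 i] at h
        exact h
      have hb0 : i - ((Q' c0 : Fin m) : ℕ) ≤ i := Nat.sub_le _ _
      have hb1 : i - ((Q' c1 : Fin m) : ℕ) ≤ i := Nat.sub_le _ _
      have hineq : score (fun r : Fin m => i - (r : ℕ)) P'' c1
          ≤ score (fun r : Fin m => i - (r : ℕ)) P'' c0 := by
        rw [hv0] at hsp1
        rw [hv1] at hsp0
        have m1 : x * i = x * (i - 1) + x := mul_eq_mul_pred_add x i (by omega)
        have m2 : y * i = y * (i - 1) + y := mul_eq_mul_pred_add y i (by omega)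
        omega
      exact winner_ne _ P'' c0 c1 (by omega) hineq hw''

lemma flavor1 (m x : ℕ) [NeZero m] (hm : 3 ≤ m)
    (n : ℕ) (hn : n = 1 + x + (x + 2)) :
    ∃ P : Fin n → Pref m,
      Manipulable (kBorda m n 2) P ∧ ¬ Manipulable (kBorda m n 1) P := by
  subst hn
  obtain ⟨c0, hv0⟩ : ∃ c : Fin m, (c : ℕ) = 0 := ⟨⟨0, by omega⟩, rfl⟩
  obtain ⟨c1, hv1⟩ : ∃ c : Fin m, (c : ℕ) = 1 := ⟨⟨1, by omega⟩, rfl⟩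
  obtain ⟨cm, hvm⟩ : ∃ c : Fin m, (c : ℕ) = m - 1 := ⟨⟨m - 1, by omega⟩, rfl⟩
  set X : Pref m := Equiv.refl (Fin m) with hX
  set Y : Pref m := Equiv.swap c0 c1 with hY
  set Q : Pref m := Equiv.swap c1 cm with hQ
  set P : Fin (1 + x + (x + 2)) → Pref m :=
    fun v => if (v : ℕ) = 0 then X else if (v : ℕ) ≤ x then X else Y with hP
  have hX0 : ∀ e : Fin m, X e = e := fun e => rfl
  have hY0 : Y c0 = c1 := Equiv.swap_apply_left _ _
  have hY1 : Y c1 = c0 := Equiv.swap_apply_right _ _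
  have hYf : ∀ e : Fin m, (e : ℕ) ≠ 0 → (e : ℕ) ≠ 1 → Y e = e := by
    intro e h0 h1
    exact Equiv.swap_apply_of_ne_of_ne (by rw [Ne, Fin.ext_iff]; omega)
      (by rw [Ne, Fin.ext_iff]; omega)
  have hQ0 : Q c0 = c0 :=
    Equiv.swap_apply_of_ne_of_ne (by rw [Ne, Fin.ext_iff]; omega)
      (by rw [Ne, Fin.ext_iff]; omega)
  have hQ1 : Q c1 = cm := Equiv.swap_apply_left _ _
  have hQm : Q cm = c1 := Equiv.swap_apply_right _ _
  have hQf : ∀ e : Fin m, (e : ℕ) ≠ 1 → (e : ℕ) ≠ m - 1 → Q e = e := by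
    intro e h0 h1
    exact Equiv.swap_apply_of_ne_of_ne (by rw [Ne, Fin.ext_iff]; omega)
      (by rw [Ne, Fin.ext_iff]; omega)
  -- scores
  have hs0 : ∀ k : ℕ, score (fun r : Fin m => k - (r : ℕ)) P c0
      = k + x * k + (x + 2) * (k - 1) := by
    intro k
    rw [hP, score_profile]
    simp only [hX0, hY0, hv0, hv1, Nat.sub_zero]
  have hs1 : ∀ k : ℕ, score (fun r : Fin m => k - (r : ℕ)) P c1
      = (k - 1) + x * (k - 1) + (x + 2) * k := by
    intro k
    rw [hP, score_profile]
    simp only [hX0, hY1, hv0, hv1, Nat.sub_zero]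
  have hsf : ∀ k : ℕ, ∀ e : Fin m, 2 ≤ (e : ℕ) →
      score (fun r : Fin m => k - (r : ℕ)) P e = (1 + x + (x + 2)) * (k - (e : ℕ)) := by
    intro k e he
    rw [hP, score_profile]
    simp only [hX0, hYf e (by omega) (by omega)]
    ring
  -- sincere winner is c1 for k ∈ {1, 2}
  have hw1 : ∀ k : ℕ, k = 1 ∨ k = 2 → winner (fun r : Fin m => k - (r : ℕ)) P = c1 := by
    intro k hk
    apply winner_eq_one _ _ c0 c1 hv0 hv1
    · intro e
      rcases Nat.lt_or_ge (e : ℕ) 1 with h | h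
      · have he : e = c0 := Fin.ext (by omega)
        rw [he, hs0 k, hs1 k]
        have m1 : x * k = x * (k - 1) + x := mul_eq_mul_pred_add x k (by omega)
        have m2 : (x + 2) * k = (x + 2) * (k - 1) + (x + 2) := mul_eq_mul_pred_add (x + 2) k (by omega)
        omega
      rcases Nat.lt_or_ge (e : ℕ) 2 with h2 | h2
      · have he : e = c1 := Fin.ext (by omega)
        rw [he]
      · rw [hsf k e h2, hs1 k]
        have hz : k - (e : ℕ) = 0 := by omega
        rw [hz]
        simp
    · rw [hs0 k, hs1 k]
      have m1 : x * k = x * (k - 1) + x := mul_eq_mul_pred_add x k (by omega)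
      have m2 : (x + 2) * k = (x + 2) * (k - 1) + (x + 2) := mul_eq_mul_pred_add (x + 2) k (by omega)
      omega
  refine ⟨P, ?_, ?_⟩
  · -- Manipulable (kBorda m _ 2) P
    obtain ⟨w0, hw0v⟩ : ∃ v : Fin (1 + x + (x + 2)), (v : ℕ) = 0 := ⟨⟨0, by omega⟩, rfl⟩
    refine ⟨w0, Q, ?_⟩
    have hvX : P w0 = X := by simp only [hP, if_pos hw0v]
    set P' := Function.update P w0 Q with hP'
    have hsp : ∀ e : Fin m,
        score (fun r : Fin m => 2 - (r : ℕ)) P' e + (2 - ((X e : Fin m) : ℕ))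
          = score (fun r : Fin m => 2 - (r : ℕ)) P e + (2 - ((Q e : Fin m) : ℕ)) := by
      intro e
      have h := score_split (fun r : Fin m => 2 - (r : ℕ)) P w0 Q e
      rw [hvX] at h
      exact h
    have hw0' : winner (fun r : Fin m => 2 - (r : ℕ)) P' = c0 := by
      apply winner_eq_bot _ _ c0 hv0
      intro e
      have hs0' : score (fun r : Fin m => 2 - (r : ℕ)) P' c0 = 2 + x * 2 + (x + 2) * 1 := by
        have h := hsp c0
        rw [hX0, hQ0, hs0 2, hv0] at h
        omega
      rcases Nat.lt_or_ge (e : ℕ) 1 with h | h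
      · have he : e = c0 := Fin.ext (by omega)
        rw [he]
      rcases Nat.lt_or_ge (e : ℕ) 2 with h2 | h2
      · have he : e = c1 := Fin.ext (by omega)
        have h := hsp c1
        rw [hX0, hQ1, hs1 2, hv1, hvm] at h
        have hz : 2 - (m - 1) = 0 := by omega
        rw [hz] at h
        rw [he, hs0']
        omega
      · -- fillers
        have h := hsp e
        rw [hX0, hsf 2 e h2] at h
        have hz : 2 - (e : ℕ) = 0 := by omega
        rw [hz] at h
        have hb : 2 - ((Q e : Fin m) : ℕ) ≤ 2 := Nat.sub_le _ _
        rw [hs0']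
        have : (1 + x + (x + 2)) * 0 = 0 := by ring
        omega
    have e1 : kBorda m (1 + x + (x + 2)) 2 P' = c0 := hw0'
    have e2 : kBorda m (1 + x + (x + 2)) 2 P = c1 := hw1 2 (Or.inr rfl)
    show P w0 (kBorda m (1 + x + (x + 2)) 2 P') < P w0 (kBorda m (1 + x + (x + 2)) 2 P)
    rw [e1, e2, hvX]
    simp only [hX0]
    rw [Fin.lt_def]
    omega
  · -- not Manipulable (kBorda m _ 1) P
    rintro ⟨v, Q', hlt⟩
    simp only [kBorda] at hlt
    rw [hw1 1 (Or.inl rfl)] at hlt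
    by_cases hvX' : (v : ℕ) = 0 ∨ (v : ℕ) ≤ x
    · have hPv : P v = X := by
        rcases hvX' with h | h
        · simp only [hP, if_pos h]
        · by_cases h0 : (v : ℕ) = 0
          · simp only [hP, if_pos h0]
          · simp only [hP, if_neg h0, if_pos h]
      rw [hPv] at hlt
      simp only [hX0] at hlt
      set P'' := Function.update P v Q' with hP''
      have hw'' : winner (fun r : Fin m => 1 - (r : ℕ)) P'' = c0 := by
        apply Fin.ext
        rw [Fin.lt_def, hv1] at hlt
        rw [hv0]
        omega
      have hsp0 : score (fun r : Fin m => 1 - (r : ℕ)) P'' c0 + (1 - ((c0 : Fin m) : ℕ))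
          = (1 + x * 1 + (x + 2) * (1 - 1)) + (1 - ((Q' c0 : Fin m) : ℕ)) := by
        have h := score_split (fun r : Fin m => 1 - (r : ℕ)) P v Q' c0
        rw [hPv, hs0 1] at h
        exact h
      have hsp1 : score (fun r : Fin m => 1 - (r : ℕ)) P'' c1 + (1 - ((c1 : Fin m) : ℕ))
          = ((1 - 1) + x * (1 - 1) + (x + 2) * 1) + (1 - ((Q' c1 : Fin m) : ℕ)) := by
        have h := score_split (fun r : Fin m => 1 - (r : ℕ)) P v Q' c1
        rw [hPv, hs1 1] at h
        exact h
      have hmax := winner_isMax (fun r : Fin m => 1 - (r : ℕ)) P''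
      rw [hw''] at hmax
      have hcon := hmax c1
      simp only [hv0, hv1] at hsp0 hsp1
      have hb0 : 1 - ((Q' c0 : Fin m) : ℕ) ≤ 1 := Nat.sub_le _ _
      have hb1 : 1 - ((Q' c1 : Fin m) : ℕ) ≤ 1 := Nat.sub_le _ _
      have m1 : x * 1 = x := by ring
      have m2 : (x + 2) * 1 = x + 2 := by ring
      have m3 : x * (1 - 1) = 0 := by norm_num
      have m4 : (x + 2) * (1 - 1) = 0 := by norm_num
      omega
    · push_neg at hvX'
      have hPv : P v = Y := by simp only [hP, if_neg hvX'.1, if_neg (by omega : ¬ (v : ℕ) ≤ x)]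
      rw [hPv, hY1] at hlt
      rw [Fin.lt_def, hv0] at hlt
      omega

end S11

/-- For `1 ≤ i < j ≤ m-1` and `n ≥ 2`: `β_i ≱_PS β_j`. -/
theorem stmt_11 (m n i j : ℕ) [NeZero m] (hi : 1 ≤ i) (hij : i < j) (hj : j ≤ m - 1)
    (hn : 2 ≤ n) :
    ∃ P : Fin n → Pref m,
      Manipulable (kBorda m n j) P ∧ ¬ Manipulable (kBorda m n i) P := by
  have hm1 : 1 ≤ m := Nat.one_le_iff_ne_zero.mpr (NeZero.ne m)
  have hjm : j + 1 ≤ m := by omega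
  rcases Nat.even_or_odd n with he | ho
  · obtain ⟨t, ht⟩ := he
    exact S11.flavor0 m i j i ((n - 2) / 2) ((n - 2) / 2 + 1) 1 hi le_rfl hij hjm le_rfl rfl
      (by omega) (by omega) (by omega) n (by omega)
  · obtain ⟨t, ht⟩ := ho
    by_cases hi2 : 2 ≤ i
    · exact S11.flavor0 m i j (i - 1) t t 0 (by omega) (by omega) hij hjm (by omega)
        (by omega) (by omega) (by omega) (by omega) n (by omega)
    · by_cases hj3 : 3 ≤ j
      · exact S11.flavor0 m i j 1 t t 0 le_rfl hi hij hjm (by omega) (by omega) (by omega)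
          (by omega) (by omega) n (by omega)
      · have hi1 : i = 1 := by omega
        have hj2 : j = 2 := by omega
        subst hi1 hj2
        exact S11.flavor1 m (t - 1) (by omega) n (by omega)
end
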